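/- For every integer n ≥ 1 and all real numbers p, q, r, x, t with (1+x)(x+t)(1+xt) ≠ 0, one has Σ_{σ∈S_n} p^{nest σ} q^{cros σ} (tq)^{exc σ} r^{fix σ} = ((1+xt)/(1+x))^{n} · Σ_{σ∈S_n} p^{nest σ} q^{cros σ} · ((1+x)² t/((x+t)(1+xt)))^{cpk σ} · (q(x+t)/(1+xt))^{exc σ} · ((1+x)r/(1+xt))^{fix σ}. -/

import Mathlib

open Finset

open scoped Classical

noncomputable section

namespace EulerExc

variable {n : ℕ}

/-- 1-based value of `σ` at position `k ∈ [1,n]`, with boundary convention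
`σ(0) = σ(n+1) = 0` outside. -/
def sv (σ : Equiv.Perm (Fin n)) (k : ℕ) : ℕ :=
  if h : 1 ≤ k ∧ k ≤ n then ((σ ⟨k - 1, by omega⟩ : Fin n) : ℕ) + 1 else 0

/-- 1-based value with boundary convention `σ(0) = 0`, `σ(n+1) = ∞`. -/
def svInf (σ : Equiv.Perm (Fin n)) (k : ℕ) : ℕ :=
  if k = 0 then 0 else if k ≤ n then sv σ k else n + 1

/-- number of excedances -/
def exc (σ : Equiv.Perm (Fin n)) : ℕ := (univ.filter fun i : Fin n => i < σ i).card

/-- number of fixed points -/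
def fixc (σ : Equiv.Perm (Fin n)) : ℕ := (univ.filter fun i : Fin n => σ i = i).card

/-- number of drops -/
def dropc (σ : Equiv.Perm (Fin n)) : ℕ := (univ.filter fun i : Fin n => σ i < i).card

/-- number of inversions -/
def inv (σ : Equiv.Perm (Fin n)) : ℕ :=
  (univ.filter fun p : Fin n × Fin n => p.1 < p.2 ∧ σ p.2 < σ p.1).card

/-- number of descents -/
def des (σ : Equiv.Perm (Fin n)) : ℕ :=
  ((Icc 1 (n - 1)).filter fun i => sv σ (i + 1) < sv σ i).card

/-- number of ascents -/
def asc (σ : Equiv.Perm (Fin n)) : ℕ :=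
  ((Icc 1 (n - 1)).filter fun i => sv σ i < sv σ (i + 1)).card

/-- crossing number: pairs `(i,j)` with `j < i < σ(j) < σ(i)` or `σ(i) < σ(j) ≤ i < j` -/
def cros (σ : Equiv.Perm (Fin n)) : ℕ :=
  (univ.filter fun p : Fin n × Fin n =>
    (p.2 < p.1 ∧ p.1 < σ p.2 ∧ σ p.2 < σ p.1) ∨
    (σ p.1 < σ p.2 ∧ σ p.2 ≤ p.1 ∧ p.1 < p.2)).card

/-- nesting number: pairs `(i,j)` with `j < i < σ(i) < σ(j)` or `σ(j) < σ(i) ≤ i < j` -/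
def nest (σ : Equiv.Perm (Fin n)) : ℕ :=
  (univ.filter fun p : Fin n × Fin n =>
    (p.2 < p.1 ∧ p.1 < σ p.1 ∧ σ p.1 < σ p.2) ∨
    (σ p.2 < σ p.1 ∧ σ p.1 ≤ p.1 ∧ p.1 < p.2)).card

def icr (σ : Equiv.Perm (Fin n)) : ℕ := cros σ⁻¹

/-- number of cyclic peaks -/
def cpk (σ : Equiv.Perm (Fin n)) : ℕ :=
  (univ.filter fun x : Fin n => σ⁻¹ x < x ∧ σ x < x).card

/-- number of cyclic valleys -/
def cval (σ : Equiv.Perm (Fin n)) : ℕ :=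
  (univ.filter fun x : Fin n => x < σ⁻¹ x ∧ x < σ x).card

/-- number of double excedances -/
def cda (σ : Equiv.Perm (Fin n)) : ℕ :=
  (univ.filter fun x : Fin n => σ⁻¹ x < x ∧ x < σ x).card

/-- number of double drops -/
def cdd (σ : Equiv.Perm (Fin n)) : ℕ :=
  (univ.filter fun x : Fin n => x < σ⁻¹ x ∧ σ x < x).card

/-- number of cycles (including fixed points) -/
def cyc (σ : Equiv.Perm (Fin n)) : ℕ := σ.cycleType.card + fixc σ

/-- the star companion `σ*` of `σ`: a permutation of `{0,1,…,n}` with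
`σ*(0) = n` and `σ*(i) = σ(i) - 1` for `i ∈ [n]`. -/
def star (σ : Equiv.Perm (Fin n)) : Equiv.Perm (Fin (n + 1)) :=
  (Equiv.Perm.decomposeFin.symm (0, σ)).trans (Equiv.subRight (1 : Fin (n + 1)))

def cpkStar (σ : Equiv.Perm (Fin n)) : ℕ :=
  (univ.filter fun i : Fin (n + 1) =>
    1 ≤ (i : ℕ) ∧ (i : ℕ) < n ∧ (star σ)⁻¹ i < i ∧ star σ i < i).card

def cdaStar (σ : Equiv.Perm (Fin n)) : ℕ :=
  (univ.filter fun i : Fin (n + 1) =>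
    1 ≤ (i : ℕ) ∧ (i : ℕ) < n ∧ (star σ)⁻¹ i < i ∧ i < star σ i).card

def cddStar (σ : Equiv.Perm (Fin n)) : ℕ :=
  (univ.filter fun i : Fin (n + 1) =>
    1 ≤ (i : ℕ) ∧ (i : ℕ) < n ∧ i < (star σ)⁻¹ i ∧ star σ i < i).card

def fixStar (σ : Equiv.Perm (Fin n)) : ℕ :=
  (univ.filter fun i : Fin (n + 1) =>
    1 ≤ (i : ℕ) ∧ (i : ℕ) < n ∧ star σ i = i).card

def cycStar (σ : Equiv.Perm (Fin n)) : ℕ := cyc (star σ)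

/-- number of occurrences of the vincular pattern 31-2 -/
def p31_2 (σ : Equiv.Perm (Fin n)) : ℕ :=
  ((Icc 1 n ×ˢ Icc 1 n).filter fun p =>
    p.1 + 1 < p.2 ∧ sv σ (p.1 + 1) < sv σ p.2 ∧ sv σ p.2 < sv σ p.1).card

/-- number of occurrences of the vincular pattern 2-13 -/
def p2_13 (σ : Equiv.Perm (Fin n)) : ℕ :=
  ((Icc 1 n ×ˢ Icc 1 n).filter fun p =>
    p.2 < p.1 ∧ p.1 < n ∧ sv σ p.1 < sv σ p.2 ∧ sv σ p.2 < sv σ (p.1 + 1)).card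

/-- number of occurrences of the vincular pattern 2-31 -/
def p2_31 (σ : Equiv.Perm (Fin n)) : ℕ :=
  ((Icc 1 n ×ˢ Icc 1 n).filter fun p =>
    p.2 < p.1 ∧ p.1 < n ∧ sv σ (p.1 + 1) < sv σ p.2 ∧ sv σ p.2 < sv σ p.1).card

/-- number of peaks (convention 0--0) -/
def pk (σ : Equiv.Perm (Fin n)) : ℕ :=
  ((Icc 1 n).filter fun i => sv σ (i - 1) < sv σ i ∧ sv σ (i + 1) < sv σ i).card

/-- number of valleys (convention 0--0) -/
def vall (σ : Equiv.Perm (Fin n)) : ℕ :=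
  ((Icc 1 n).filter fun i => sv σ i < sv σ (i - 1) ∧ sv σ i < sv σ (i + 1)).card

/-- number of double ascents (convention 0--0) -/
def da (σ : Equiv.Perm (Fin n)) : ℕ :=
  ((Icc 1 n).filter fun i => sv σ (i - 1) < sv σ i ∧ sv σ i < sv σ (i + 1)).card

/-- number of double descents (convention 0--0) -/
def dd (σ : Equiv.Perm (Fin n)) : ℕ :=
  ((Icc 1 n).filter fun i => sv σ i < sv σ (i - 1) ∧ sv σ (i + 1) < sv σ i).card

/-- number of peaks (convention 0--∞) -/
def lpk (σ : Equiv.Perm (Fin n)) : ℕ :=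
  ((Icc 1 n).filter fun i => svInf σ (i - 1) < svInf σ i ∧ svInf σ (i + 1) < svInf σ i).card

/-- number of valleys (convention 0--∞) -/
def lval (σ : Equiv.Perm (Fin n)) : ℕ :=
  ((Icc 1 n).filter fun i => svInf σ i < svInf σ (i - 1) ∧ svInf σ i < svInf σ (i + 1)).card

/-- number of double ascents (convention 0--∞) -/
def lda (σ : Equiv.Perm (Fin n)) : ℕ :=
  ((Icc 1 n).filter fun i => svInf σ (i - 1) < svInf σ i ∧ svInf σ i < svInf σ (i + 1)).card

/-- number of double descents (convention 0--∞) -/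
def ldd (σ : Equiv.Perm (Fin n)) : ℕ :=
  ((Icc 1 n).filter fun i => svInf σ i < svInf σ (i - 1) ∧ svInf σ (i + 1) < svInf σ i).card

/-- number of foremaxima: double ascents (convention 0--∞) that are
left-to-right maxima -/
def fmax (σ : Equiv.Perm (Fin n)) : ℕ :=
  ((Icc 1 n).filter fun i =>
    svInf σ (i - 1) < svInf σ i ∧ svInf σ i < svInf σ (i + 1) ∧
    ∀ j ∈ Icc 1 i, sv σ j ≤ sv σ i).card

/-- `scda σ = #{i ∈ [n-1] : i < σ(i) and i+1 > σ⁻¹(i+1)}` -/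
def scda (σ : Equiv.Perm (Fin n)) : ℕ :=
  ((Icc 1 (n - 1)).filter fun i => i < sv σ i ∧ sv σ⁻¹ (i + 1) < i + 1).card

/-- `σ` avoids the pattern 321 -/
def Avoids321 (σ : Equiv.Perm (Fin n)) : Prop :=
  ¬ ∃ i j k : Fin n, i < j ∧ j < k ∧ σ k < σ j ∧ σ j < σ i

/-- `σ` avoids the pattern 231 -/
def Avoids231 (σ : Equiv.Perm (Fin n)) : Prop :=
  ¬ ∃ i j k : Fin n, i < j ∧ j < k ∧ σ k < σ i ∧ σ i < σ j

/-- `σ` avoids the pattern 312 -/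
def Avoids312 (σ : Equiv.Perm (Fin n)) : Prop :=
  ¬ ∃ i j k : Fin n, i < j ∧ j < k ∧ σ j < σ k ∧ σ k < σ i

/-- `σ` avoids the pattern 213 -/
def Avoids213 (σ : Equiv.Perm (Fin n)) : Prop :=
  ¬ ∃ i j k : Fin n, i < j ∧ j < k ∧ σ j < σ i ∧ σ i < σ k

/-- `σ` avoids the pattern 132 -/
def Avoids132 (σ : Equiv.Perm (Fin n)) : Prop :=
  ¬ ∃ i j k : Fin n, i < j ∧ j < k ∧ σ i < σ k ∧ σ k < σ j

/-- `σ` is a derangement -/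
def IsDerangement (σ : Equiv.Perm (Fin n)) : Prop := ∀ i, σ i ≠ i

/-! Signed permutations `B_n`, encoded as a pair `(σ, ε)` of an ordinary
permutation (the absolute value) together with signs attached to positions. -/

/-- number of negative values -/
def negB (ε : Fin n → Bool) : ℕ := (univ.filter fun i => ε i = true).card

/-- number of type B excedances, w.r.t. the friends order -/
def excB (σ : Equiv.Perm (Fin n)) (ε : Fin n → Bool) : ℕ :=
  (univ.filter fun i : Fin n => i < σ i ∨ (σ i = i ∧ ε i = true)).card

/-- the (1-based, signed, integer) value of the signed permutation `(σ, ε)` at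
position `k ∈ [1,n]`, with `0` outside. -/
def signedVal (σ : Equiv.Perm (Fin n)) (ε : Fin n → Bool) (k : ℕ) : ℤ :=
  if h : 1 ≤ k ∧ k ≤ n then
    (if ε ⟨k - 1, by omega⟩ then -(((σ ⟨k - 1, by omega⟩ : Fin n) : ℕ) + 1 : ℤ)
     else (((σ ⟨k - 1, by omega⟩ : Fin n) : ℕ) + 1 : ℤ))
  else 0

/-- number of type B descents -/
def desB (σ : Equiv.Perm (Fin n)) (ε : Fin n → Bool) : ℕ :=
  ((range n).filter fun i => signedVal σ ε (i + 1) < signedVal σ ε i).card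


def qint (p q : ℝ) (k : ℕ) : ℝ := ∑ c ∈ Finset.range k, q ^ c * p ^ (k - 1 - c)

lemma qint_zero (p q : ℝ) : qint p q 0 = 0 := by simp [qint]

lemma perm_inv_apply_self {m : ℕ} (f : Equiv.Perm (Fin m)) (x : Fin m) : f⁻¹ (f x) = x := by
  simp

lemma perm_apply_inv_self {m : ℕ} (f : Equiv.Perm (Fin m)) (x : Fin m) : f (f⁻¹ x) = x := by
  simp

lemma card_filter_lt_orderIso (S : Finset (Fin n)) (i : Fin S.card) :
    (S.filter (fun y => y < (S.orderIsoOfFin rfl i : Fin n))).card = (i : ℕ) := by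
  classical
  have h : (S.filter (fun y => y < (S.orderIsoOfFin rfl i : Fin n))).card
      = (univ.filter (fun j : Fin S.card => j < i)).card := by
    apply Finset.card_nbij' (i := fun y => if hy : y ∈ S then (S.orderIsoOfFin rfl).symm ⟨y, hy⟩ else i)
      (j := fun j => (S.orderIsoOfFin rfl j : Fin n))
    · intro y hy
      simp only [mem_coe, mem_filter] at hy
      simp only [mem_coe, mem_filter, mem_univ, true_and, dif_pos hy.1]
      have : (S.orderIsoOfFin rfl) ((S.orderIsoOfFin rfl).symm ⟨y, hy.1⟩) = ⟨y, hy.1⟩ :=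
        (S.orderIsoOfFin rfl).apply_symm_apply _
      rw [← OrderIso.lt_iff_lt (S.orderIsoOfFin rfl), this]
      exact hy.2
    · intro j hj
      simp only [mem_coe, mem_filter, mem_univ, true_and] at hj
      simp only [mem_coe, mem_filter]
      refine ⟨(S.orderIsoOfFin rfl j).2, ?_⟩
      exact (OrderIso.lt_iff_lt (S.orderIsoOfFin rfl)).mpr hj
    · intro y hy
      simp only [mem_coe, mem_filter] at hy
      simp only [dif_pos hy.1]
      have : (S.orderIsoOfFin rfl) ((S.orderIsoOfFin rfl).symm ⟨y, hy.1⟩) = ⟨y, hy.1⟩ :=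
        (S.orderIsoOfFin rfl).apply_symm_apply _
      rw [this]
    · intro j hj
      simp only [mem_coe, mem_filter, mem_univ, true_and] at hj
      have hmem : ((S.orderIsoOfFin rfl j : Fin n)) ∈ S := (S.orderIsoOfFin rfl j).2
      simp only [dif_pos hmem]
      have : (⟨(S.orderIsoOfFin rfl j : Fin n), hmem⟩ : {x // x ∈ S}) = S.orderIsoOfFin rfl j := by
        ext; rfl
      rw [this, OrderIso.symm_apply_apply]
  rw [h, show (univ.filter (fun j : Fin S.card => j < i)) = Finset.Iio i by ext j; simp]
  simp

lemma card_filter_gt_orderIso (S : Finset (Fin n)) (i : Fin S.card) :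
    (S.filter (fun y => (S.orderIsoOfFin rfl i : Fin n) < y)).card = S.card - 1 - (i : ℕ) := by
  classical
  have htot : (S.filter (fun y => y < (S.orderIsoOfFin rfl i : Fin n))).card
      + (S.filter (fun y => (S.orderIsoOfFin rfl i : Fin n) < y)).card + 1 = S.card := by
    have hsplit : S = (S.filter (fun y => y < (S.orderIsoOfFin rfl i : Fin n)))
        ∪ (S.filter (fun y => (S.orderIsoOfFin rfl i : Fin n) < y))
        ∪ {(S.orderIsoOfFin rfl i : Fin n)} := by
      ext y
      simp only [mem_union, mem_filter, mem_singleton]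
      constructor
      · intro hy
        rcases lt_trichotomy y (S.orderIsoOfFin rfl i : Fin n) with hlt | heq | hgt
        · exact Or.inl (Or.inl ⟨hy, hlt⟩)
        · exact Or.inr heq
        · exact Or.inl (Or.inr ⟨hy, hgt⟩)
      · rintro ((⟨hy, _⟩ | ⟨hy, _⟩) | rfl)
        · exact hy
        · exact hy
        · exact (S.orderIsoOfFin rfl i).2
    have hd1 : Disjoint ((S.filter (fun y => y < (S.orderIsoOfFin rfl i : Fin n)))
        ∪ (S.filter (fun y => (S.orderIsoOfFin rfl i : Fin n) < y)))
        ({(S.orderIsoOfFin rfl i : Fin n)} : Finset (Fin n)) := by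
      simp only [disjoint_left, mem_union, mem_filter, mem_singleton]
      rintro a (⟨_, ha⟩ | ⟨_, ha⟩) rfl
      · exact lt_irrefl _ ha
      · exact lt_irrefl _ ha
    have hd2 : Disjoint (S.filter (fun y => y < (S.orderIsoOfFin rfl i : Fin n)))
        (S.filter (fun y => (S.orderIsoOfFin rfl i : Fin n) < y)) := by
      simp only [disjoint_left, mem_filter, mem_singleton]
      rintro a ⟨_, ha⟩ ha2
      exact absurd ha2.2 (not_lt.mpr (le_of_lt ha))
    have hcard := congrArg Finset.card hsplit
    rw [card_union_of_disjoint hd1, card_union_of_disjoint hd2, card_singleton] at hcard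
    omega
  rw [card_filter_lt_orderIso] at htot
  omega

lemma qint_reflect (p q : ℝ) (k : ℕ) :
    qint p q k = ∑ c ∈ Finset.range k, q ^ (k - 1 - c) * p ^ c := by
  rw [qint, ← Finset.sum_range_reflect]
  refine Finset.sum_congr rfl fun c hc => ?_
  simp only [Finset.mem_range] at hc
  have h1 : k - 1 - (k - 1 - c) = c := by omega
  rw [h1]

lemma rank_sum (p q : ℝ) (S : Finset (Fin n)) :
    ∑ a ∈ S, q ^ (S.filter (fun y => a < y)).card * p ^ (S.filter (fun y => y < a)).card
      = qint p q S.card := by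
  classical
  rw [qint_reflect, ← Fin.sum_univ_eq_sum_range (fun c => q ^ (S.card - 1 - c) * p ^ c)]
  refine Finset.sum_bij (i := fun a ha => (S.orderIsoOfFin rfl).symm ⟨a, ha⟩) ?_ ?_ ?_ ?_
  · intro a ha; exact mem_univ _
  · intro a₁ ha₁ a₂ ha₂ hh
    have := congrArg (S.orderIsoOfFin rfl) hh
    rw [OrderIso.apply_symm_apply, OrderIso.apply_symm_apply] at this
    exact congrArg Subtype.val this
  · intro i _
    refine ⟨(S.orderIsoOfFin rfl i : Fin n), (S.orderIsoOfFin rfl i).2, ?_⟩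
    show (S.orderIsoOfFin rfl).symm ⟨(S.orderIsoOfFin rfl i : Fin n), _⟩ = i
    have : (⟨(S.orderIsoOfFin rfl i : Fin n), (S.orderIsoOfFin rfl i).2⟩ : {x // x ∈ S})
        = S.orderIsoOfFin rfl i := by ext; rfl
    rw [this, OrderIso.symm_apply_apply]
  · intro a ha
    show _ = q ^ (S.card - 1 - ((S.orderIsoOfFin rfl).symm ⟨a, ha⟩ : ℕ))
      * p ^ (((S.orderIsoOfFin rfl).symm ⟨a, ha⟩ : Fin S.card) : ℕ)
    have h1 : (S.filter (fun y => a < y)).card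
        = S.card - 1 - (((S.orderIsoOfFin rfl).symm ⟨a, ha⟩ : Fin S.card) : ℕ) := by
      have := card_filter_gt_orderIso S ((S.orderIsoOfFin rfl).symm ⟨a, ha⟩)
      rwa [OrderIso.apply_symm_apply] at this
    have h2 : (S.filter (fun y => y < a)).card
        = (((S.orderIsoOfFin rfl).symm ⟨a, ha⟩ : Fin S.card) : ℕ) := by
      have := card_filter_lt_orderIso S ((S.orderIsoOfFin rfl).symm ⟨a, ha⟩)
      rwa [OrderIso.apply_symm_apply] at this
    rw [h1, h2]


def kk (A B : Finset (Fin n)) (x : Fin n) : ℕ :=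
  (A.filter (fun y => y < x)).card - (B.filter (fun y => y < x)).card

def UpSet (A B : Finset (Fin n)) : Finset (Fin n → Fin n) :=
  univ.filter fun u => (∀ a ∈ A, a < u a) ∧ (∀ x, x ∉ A → u x = x) ∧ A.image u = B
    ∧ Set.InjOn u ↑A

def crosU (A : Finset (Fin n)) (u : Fin n → Fin n) : ℕ :=
  ((A ×ˢ A).filter fun z => z.2 < z.1 ∧ z.1 < u z.2 ∧ u z.2 < u z.1).card

def nestU (A : Finset (Fin n)) (u : Fin n → Fin n) : ℕ :=
  ((A ×ˢ A).filter fun z => z.2 < z.1 ∧ z.1 < u z.1 ∧ u z.1 < u z.2).card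

lemma upSet_empty_both : UpSet (∅ : Finset (Fin n)) ∅ = {fun x => x} := by
  ext u
  simp only [UpSet, mem_filter, mem_univ, true_and, mem_singleton]
  constructor
  · rintro ⟨-, h2, -, -⟩
    funext x
    exact h2 x (notMem_empty x)
  · rintro rfl
    refine ⟨by simp, fun x _ => rfl, by simp, by simp [Set.InjOn]⟩

lemma upSet_empty_right (A : Finset (Fin n)) (hA : A ≠ ∅) : UpSet A ∅ = ∅ := by
  ext u
  simp only [UpSet, mem_filter, mem_univ, true_and, notMem_empty, iff_false, not_and]
  intro _ _ h3
  exact absurd (Finset.image_eq_empty.mp h3) hA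

lemma crosU_empty (u : Fin n → Fin n) : crosU ∅ u = 0 := by simp [crosU]
lemma nestU_empty (u : Fin n → Fin n) : nestU ∅ u = 0 := by simp [nestU]


lemma crosU_step (A B : Finset (Fin n)) (a b1 : Fin n) (u : Fin n → Fin n)
    (ha : a ∈ A) (hgt : ∀ y ∈ A, y < u y) (himg : A.image u = B) (hinj : Set.InjOn u ↑A)
    (hua : u a = b1) (hmin : ∀ b ∈ B, b1 ≤ b) :
    crosU A u = (A.filter fun y => a < y ∧ y < b1).card
      + crosU (A.erase a) (Function.update u a a) := by
  classical
  have hmemB : ∀ y ∈ A, u y ∈ B := by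
    intro y hy; rw [← himg]; exact Finset.mem_image_of_mem u hy
  have hne : ∀ y ∈ A, y ≠ a → b1 < u y := by
    intro y hy hyne
    rcases lt_or_eq_of_le (hmin _ (hmemB y hy)) with h | h
    · exact h
    · exact absurd (hinj hy ha (by rw [hua, ← h])) hyne
  have hsplit : ((A ×ˢ A).filter fun z => z.2 < z.1 ∧ z.1 < u z.2 ∧ u z.2 < u z.1)
      = ((A.filter fun y => a < y ∧ y < b1).image (fun y => (y, a)))
        ∪ (((A.erase a) ×ˢ (A.erase a)).filter
            fun z => z.2 < z.1 ∧ z.1 < u z.2 ∧ u z.2 < u z.1) := by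
    ext z
    simp only [mem_filter, mem_union, mem_image, mem_product, mem_erase]
    constructor
    · rintro ⟨⟨hz1, hz2⟩, h1, h2, h3⟩
      by_cases hz2a : z.2 = a
      · left
        refine ⟨z.1, ⟨hz1, ?_, ?_⟩, ?_⟩
        · rw [← hz2a]; exact h1
        · rw [hz2a, hua] at h2; exact h2
        · rw [← hz2a]
      · right
        have hz1a : z.1 ≠ a := by
          intro hz1a
          have hb2 : b1 < u z.2 := hne z.2 hz2 hz2a
          rw [hz1a, hua] at h3
          exact absurd h3 (not_lt.mpr (le_of_lt hb2))
        exact ⟨⟨⟨hz1a, hz1⟩, hz2a, hz2⟩, h1, h2, h3⟩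
    · rintro (⟨y, hy, rfl⟩ | ⟨⟨⟨hz1a, hz1⟩, hz2a, hz2⟩, hP⟩)
      · obtain ⟨hy, hay, hyb⟩ := hy
        refine ⟨⟨hy, ha⟩, hay, ?_, ?_⟩
        · show y < u a; rw [hua]; exact hyb
        · show u a < u y; rw [hua]; exact hne y hy (ne_of_gt hay)
      · exact ⟨⟨hz1, hz2⟩, hP⟩
  have hdis : Disjoint ((A.filter fun y => a < y ∧ y < b1).image (fun y => (y, a)))
      (((A.erase a) ×ˢ (A.erase a)).filter
        fun z => z.2 < z.1 ∧ z.1 < u z.2 ∧ u z.2 < u z.1) := by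
    simp only [disjoint_left, mem_image, mem_filter, mem_product, mem_erase]
    rintro z ⟨y, hy, rfl⟩ ⟨⟨-, ⟨hz2a, -⟩⟩, -⟩
    exact hz2a rfl
  rw [crosU, hsplit, card_union_of_disjoint hdis,
    Finset.card_image_of_injective _ (fun y1 y2 hh => (Prod.mk.injEq _ _ _ _ ▸ hh).1)]
  congr 1
  rw [crosU]
  congr 1
  apply Finset.filter_congr
  intro z hz
  simp only [mem_product, mem_erase] at hz
  rw [Function.update_of_ne hz.2.1, Function.update_of_ne hz.1.1]

lemma nestU_step (A B : Finset (Fin n)) (a b1 : Fin n) (u : Fin n → Fin n)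
    (ha : a ∈ A) (hgt : ∀ y ∈ A, y < u y) (himg : A.image u = B) (hinj : Set.InjOn u ↑A)
    (hua : u a = b1) (hmin : ∀ b ∈ B, b1 ≤ b) :
    nestU A u = (A.filter fun y => y < a).card
      + nestU (A.erase a) (Function.update u a a) := by
  classical
  have hmemB : ∀ y ∈ A, u y ∈ B := by
    intro y hy; rw [← himg]; exact Finset.mem_image_of_mem u hy
  have hne : ∀ y ∈ A, y ≠ a → b1 < u y := by
    intro y hy hyne
    rcases lt_or_eq_of_le (hmin _ (hmemB y hy)) with h | h
    · exact h
    · exact absurd (hinj hy ha (by rw [hua, ← h])) hyne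
  have hsplit : ((A ×ˢ A).filter fun z => z.2 < z.1 ∧ z.1 < u z.1 ∧ u z.1 < u z.2)
      = ((A.filter fun y => y < a).image (fun y => (a, y)))
        ∪ (((A.erase a) ×ˢ (A.erase a)).filter
            fun z => z.2 < z.1 ∧ z.1 < u z.1 ∧ u z.1 < u z.2) := by
    ext z
    simp only [mem_filter, mem_union, mem_image, mem_product, mem_erase]
    constructor
    · rintro ⟨⟨hz1, hz2⟩, h1, h2, h3⟩
      by_cases hz1a : z.1 = a
      · left
        refine ⟨z.2, ⟨hz2, ?_⟩, ?_⟩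
        · rw [← hz1a]; exact h1
        · rw [← hz1a]
      · right
        have hz2a : z.2 ≠ a := by
          intro hz2a
          have hb2 : b1 < u z.1 := hne z.1 hz1 hz1a
          rw [hz2a, hua] at h3
          exact absurd h3 (not_lt.mpr (le_of_lt hb2))
        exact ⟨⟨⟨hz1a, hz1⟩, hz2a, hz2⟩, h1, h2, h3⟩
    · rintro (⟨y, hy, rfl⟩ | ⟨⟨⟨hz1a, hz1⟩, hz2a, hz2⟩, hP⟩)
      · obtain ⟨hy, hya⟩ := hy
        refine ⟨⟨ha, hy⟩, hya, ?_, ?_⟩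
        · show a < u a; rw [hua]; exact hua ▸ (hgt a ha)
        · show u a < u y; rw [hua]; exact hne y hy (ne_of_lt hya)
      · exact ⟨⟨hz1, hz2⟩, hP⟩
  have hdis : Disjoint ((A.filter fun y => y < a).image (fun y => (a, y)))
      (((A.erase a) ×ˢ (A.erase a)).filter
        fun z => z.2 < z.1 ∧ z.1 < u z.1 ∧ u z.1 < u z.2) := by
    simp only [disjoint_left, mem_image, mem_filter, mem_product, mem_erase]
    rintro z ⟨y, hy, rfl⟩ ⟨⟨⟨hz1a, -⟩, -⟩, -⟩
    exact hz1a rfl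
  rw [nestU, hsplit, card_union_of_disjoint hdis,
    Finset.card_image_of_injective _ (fun y1 y2 hh => (Prod.mk.injEq _ _ _ _ ▸ hh).2)]
  congr 1
  rw [nestU]
  congr 1
  apply Finset.filter_congr
  intro z hz
  simp only [mem_product, mem_erase] at hz
  rw [Function.update_of_ne hz.1.1, Function.update_of_ne hz.2.1]

lemma upSet_fwd (A B : Finset (Fin n)) (a b1 : Fin n) (u : Fin n → Fin n)
    (ha : a ∈ A) (hb1B : b1 ∈ B) (hmin : ∀ b ∈ B, b1 ≤ b)
    (hu : u ∈ UpSet A B) (hua : u a = b1) :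
    Function.update u a a ∈ UpSet (A.erase a) (B.erase b1) := by
  classical
  simp only [UpSet, mem_filter, mem_univ, true_and] at hu ⊢
  obtain ⟨hgt, hid, himg, hinj⟩ := hu
  have hmemB : ∀ y ∈ A, u y ∈ B := by
    intro y hy; rw [← himg]; exact Finset.mem_image_of_mem u hy
  refine ⟨?_, ?_, ?_, ?_⟩
  · intro y hy
    rw [Function.update_of_ne (Finset.ne_of_mem_erase hy)]
    exact hgt y (Finset.mem_of_mem_erase hy)
  · intro x hx
    by_cases hxa : x = a
    · subst hxa; rw [Function.update_self]
    · rw [Function.update_of_ne hxa]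
      exact hid x (fun hxA => hx (Finset.mem_erase.mpr ⟨hxa, hxA⟩))
  · ext b
    simp only [mem_image, mem_erase]
    constructor
    · rintro ⟨y, hy, rfl⟩
      rw [Function.update_of_ne hy.1]
      refine ⟨fun hb => hy.1 (hinj hy.2 ha (by rw [hb, hua])), hmemB y hy.2⟩
    · rintro ⟨hbne, hbB⟩
      rw [← himg, Finset.mem_image] at hbB
      obtain ⟨y, hy, rfl⟩ := hbB
      have hyne : y ≠ a := fun hh => hbne (by rw [hh, hua])
      exact ⟨y, ⟨hyne, hy⟩, by rw [Function.update_of_ne hyne]⟩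
  · intro y1 hy1 y2 hy2 hh
    simp only [Finset.coe_erase, Set.mem_diff, Set.mem_singleton_iff, Finset.mem_coe] at hy1 hy2
    rw [Function.update_of_ne hy1.2, Function.update_of_ne hy2.2] at hh
    exact hinj hy1.1 hy2.1 hh

lemma upSet_bwd (A B : Finset (Fin n)) (a b1 : Fin n) (u' : Fin n → Fin n)
    (ha : a ∈ A) (hb1B : b1 ∈ B) (halt : a < b1)
    (hu' : u' ∈ UpSet (A.erase a) (B.erase b1)) :
    Function.update u' a b1 ∈ UpSet A B := by
  classical
  simp only [UpSet, mem_filter, mem_univ, true_and] at hu' ⊢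
  obtain ⟨hgt, hid, himg, hinj⟩ := hu'
  have hmemB' : ∀ y ∈ A.erase a, u' y ∈ B.erase b1 := by
    intro y hy; rw [← himg]; exact Finset.mem_image_of_mem u' hy
  refine ⟨?_, ?_, ?_, ?_⟩
  · intro y hy
    by_cases hya : y = a
    · subst hya; rw [Function.update_self]; exact halt
    · rw [Function.update_of_ne hya]
      exact hgt y (Finset.mem_erase.mpr ⟨hya, hy⟩)
  · intro x hx
    have hxa : x ≠ a := fun hh => hx (hh ▸ ha)
    rw [Function.update_of_ne hxa]
    exact hid x (fun hxA => hx (Finset.mem_of_mem_erase hxA))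
  · ext b
    simp only [mem_image]
    constructor
    · rintro ⟨y, hy, rfl⟩
      by_cases hya : y = a
      · subst hya; rw [Function.update_self]; exact hb1B
      · rw [Function.update_of_ne hya]
        exact Finset.mem_of_mem_erase (hmemB' y (Finset.mem_erase.mpr ⟨hya, hy⟩))
    · intro hbB
      by_cases hbb1 : b = b1
      · exact ⟨a, ha, by rw [Function.update_self, hbb1]⟩
      · have : b ∈ B.erase b1 := Finset.mem_erase.mpr ⟨hbb1, hbB⟩
        rw [← himg, Finset.mem_image] at this
        obtain ⟨y, hy, rfl⟩ := this
        exact ⟨y, Finset.mem_of_mem_erase hy,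
          by rw [Function.update_of_ne (Finset.ne_of_mem_erase hy)]⟩
  · intro y1 hy1 y2 hy2 hh
    simp only [Finset.mem_coe] at hy1 hy2
    by_cases h1a : y1 = a <;> by_cases h2a : y2 = a
    · rw [h1a, h2a]
    · subst h1a
      rw [Function.update_self, Function.update_of_ne h2a] at hh
      have := hmemB' y2 (Finset.mem_erase.mpr ⟨h2a, hy2⟩)
      rw [← hh] at this
      exact absurd rfl (Finset.ne_of_mem_erase this)
    · subst h2a
      rw [Function.update_self, Function.update_of_ne h1a] at hh
      have := hmemB' y1 (Finset.mem_erase.mpr ⟨h1a, hy1⟩)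
      rw [hh] at this
      exact absurd rfl (Finset.ne_of_mem_erase this)
    · rw [Function.update_of_ne h1a, Function.update_of_ne h2a] at hh
      exact hinj (Finset.mem_coe.mpr (Finset.mem_erase.mpr ⟨h1a, hy1⟩))
        (Finset.mem_coe.mpr (Finset.mem_erase.mpr ⟨h2a, hy2⟩)) hh

lemma kk_stable (A B : Finset (Fin n)) (a b1 b : Fin n)
    (ha : a ∈ A) (hb1B : b1 ∈ B) (hab1 : a ≤ b1) (hb1b : b1 < b) :
    kk (A.erase a) (B.erase b1) b = kk A B b := by
  classical
  have h1 : (A.erase a).filter (fun y => y < b) = (A.filter (fun y => y < b)).erase a := by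
    ext y; simp only [mem_filter, mem_erase]; tauto
  have h2 : (B.erase b1).filter (fun y => y < b) = (B.filter (fun y => y < b)).erase b1 := by
    ext y; simp only [mem_filter, mem_erase]; tauto
  have ha' : a ∈ A.filter (fun y => y < b) := mem_filter.mpr ⟨ha, lt_of_le_of_lt hab1 hb1b⟩
  have hb1' : b1 ∈ B.filter (fun y => y < b) := mem_filter.mpr ⟨hb1B, hb1b⟩
  rw [kk, kk, h1, h2, Finset.card_erase_of_mem ha', Finset.card_erase_of_mem hb1']
  have c1 : 1 ≤ (A.filter (fun y => y < b)).card := Finset.card_pos.mpr ⟨a, ha'⟩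
  have c2 : 1 ≤ (B.filter (fun y => y < b)).card := Finset.card_pos.mpr ⟨b1, hb1'⟩
  omega

lemma upSum (p q : ℝ) : ∀ (N : ℕ) (B A : Finset (Fin n)), B.card ≤ N →
    ∑ u ∈ UpSet A B, q ^ crosU A u * p ^ nestU A u =
      if A.card = B.card then ∏ b ∈ B, qint p q (kk A B b) else 0 := by
  intro N
  induction N with
  | zero =>
    intro B A hB
    have hBe : B = ∅ := Finset.card_eq_zero.mp (Nat.le_zero.mp hB)
    subst hBe
    by_cases hA : A = ∅
    · subst hA
      rw [upSet_empty_both]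
      simp [crosU_empty, nestU_empty]
    · rw [upSet_empty_right A hA]
      have : A.card ≠ 0 := by
        simpa [Finset.card_eq_zero] using hA
      simp [this]
  | succ N ih =>
    intro B A hB
    by_cases hBe : B = ∅
    · subst hBe
      by_cases hA : A = ∅
      · subst hA
        rw [upSet_empty_both]
        simp [crosU_empty, nestU_empty]
      · rw [upSet_empty_right A hA]
        have : A.card ≠ 0 := by simpa [Finset.card_eq_zero] using hA
        simp [this]
    · -- main step
      have hBne : B.Nonempty := Finset.nonempty_iff_ne_empty.mpr hBe
      set b1 := B.min' hBne with hb1def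
      have hb1B : b1 ∈ B := B.min'_mem hBne
      have hb1min : ∀ b ∈ B, b1 ≤ b := fun b hb => B.min'_le b hb
      have hpart : UpSet A B = (A.filter (fun y => y < b1)).biUnion
          (fun a => (UpSet A B).filter (fun u => u a = b1)) := by
        ext u
        simp only [mem_biUnion, mem_filter]
        constructor
        · intro hu
          have hu' := hu
          simp only [UpSet, mem_filter, mem_univ, true_and] at hu'
          obtain ⟨hgt, hid, himg, hinj⟩ := hu'
          have hmem : b1 ∈ A.image u := by rw [himg]; exact hb1B
          rw [Finset.mem_image] at hmem
          obtain ⟨a, haA, hab⟩ := hmem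
          exact ⟨a, ⟨haA, hab ▸ hgt a haA⟩, hu, hab⟩
        · rintro ⟨a, -, hu, -⟩; exact hu
      have hdisj : (↑(A.filter (fun y => y < b1)) : Set (Fin n)).PairwiseDisjoint
          (fun a => (UpSet A B).filter (fun u => u a = b1)) := by
        intro a1 h1 a2 h2 hne
        simp only [Function.onFun, Finset.disjoint_left, mem_filter]
        rintro u ⟨hu, hu1⟩ ⟨-, hu2⟩
        simp only [UpSet, mem_filter, mem_univ, true_and] at hu
        simp only [Finset.coe_filter, Set.mem_setOf_eq] at h1 h2
        exact hne (hu.2.2.2 (Finset.mem_coe.mpr h1.1) (Finset.mem_coe.mpr h2.1)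
          (by rw [hu1, hu2]))
      rw [hpart, Finset.sum_biUnion hdisj]
      have hinner : ∀ a ∈ A.filter (fun y => y < b1),
          ∑ u ∈ (UpSet A B).filter (fun u => u a = b1), q ^ crosU A u * p ^ nestU A u
          = (q ^ (A.filter (fun y => a < y ∧ y < b1)).card
              * p ^ (A.filter (fun y => y < a)).card)
            * ∑ u' ∈ UpSet (A.erase a) (B.erase b1),
                q ^ crosU (A.erase a) u' * p ^ nestU (A.erase a) u' := by
        intro a haf
        obtain ⟨haA, halt⟩ := mem_filter.mp haf
        rw [Finset.mul_sum]
        refine Finset.sum_nbij' (i := fun u => Function.update u a a)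
          (j := fun u' => Function.update u' a b1) ?_ ?_ ?_ ?_ ?_
        · intro u hu
          obtain ⟨huU, hua⟩ := mem_filter.mp hu
          exact upSet_fwd A B a b1 u haA hb1B hb1min huU hua
        · intro u' hu'
          exact mem_filter.mpr ⟨upSet_bwd A B a b1 u' haA hb1B halt hu',
            Function.update_self a b1 u'⟩
        · intro u hu
          obtain ⟨huU, hua⟩ := mem_filter.mp hu
          funext xx
          by_cases hxa : xx = a
          · subst hxa; simp [Function.update_self, hua]
          · simp [Function.update_of_ne hxa]
        · intro u' hu'
          simp only [UpSet, mem_filter, mem_univ, true_and] at hu'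
          funext xx
          by_cases hxa : xx = a
          · subst hxa
            simp only [Function.update_self]
            exact (hu'.2.1 xx (Finset.notMem_erase xx A)).symm
          · simp [Function.update_of_ne hxa]
        · intro u hu
          obtain ⟨huU, hua⟩ := mem_filter.mp hu
          simp only [UpSet, mem_filter, mem_univ, true_and] at huU
          obtain ⟨hgt, hid, himg, hinj⟩ := huU
          rw [crosU_step A B a b1 u haA hgt himg hinj hua hb1min,
              nestU_step A B a b1 u haA hgt himg hinj hua hb1min, pow_add, pow_add]
          ring
      rw [Finset.sum_congr rfl hinner]
      have hcard_erase : (B.erase b1).card ≤ N := by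
        rw [Finset.card_erase_of_mem hb1B]; omega
      have hkk : ∀ a ∈ A.filter (fun y => y < b1), ∀ b ∈ B.erase b1,
          kk (A.erase a) (B.erase b1) b = kk A B b := by
        intro a haf b hb
        obtain ⟨haA, halt⟩ := mem_filter.mp haf
        obtain ⟨hbne, hbB⟩ := Finset.mem_erase.mp hb
        exact kk_stable A B a b1 b haA hb1B (le_of_lt halt)
          (lt_of_le_of_ne (hb1min b hbB) (Ne.symm hbne))
      by_cases hguard : A.card = B.card
      · have hstep : ∀ a ∈ A.filter (fun y => y < b1),
            (q ^ (A.filter (fun y => a < y ∧ y < b1)).card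
              * p ^ (A.filter (fun y => y < a)).card)
            * (∑ u' ∈ UpSet (A.erase a) (B.erase b1),
                q ^ crosU (A.erase a) u' * p ^ nestU (A.erase a) u')
            = (q ^ (A.filter (fun y => a < y ∧ y < b1)).card
              * p ^ (A.filter (fun y => y < a)).card)
              * ∏ b ∈ B.erase b1, qint p q (kk A B b) := by
          intro a haf
          obtain ⟨haA, halt⟩ := mem_filter.mp haf
          rw [ih _ _ hcard_erase, if_pos
            (by rw [Finset.card_erase_of_mem haA, Finset.card_erase_of_mem hb1B, hguard])]
          congr 1
          exact Finset.prod_congr rfl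
            (fun b hb => congrArg (qint p q) (hkk a haf b hb))
        rw [Finset.sum_congr rfl hstep, ← Finset.sum_mul, if_pos hguard]
        have hsum : ∑ a ∈ A.filter (fun y => y < b1),
            q ^ (A.filter (fun y => a < y ∧ y < b1)).card
              * p ^ (A.filter (fun y => y < a)).card
            = qint p q (kk A B b1) := by
          set S := A.filter (fun y => y < b1) with hS
          have h1 : ∀ a ∈ S, (A.filter fun y => a < y ∧ y < b1)
              = S.filter (fun y => a < y) := by
            intro a haf; ext y
            constructor
            · intro hy
              obtain ⟨hyA, hay, hyb⟩ := mem_filter.mp hy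
              exact mem_filter.mpr ⟨mem_filter.mpr ⟨hyA, hyb⟩, hay⟩
            · intro hy
              obtain ⟨hyS, hay⟩ := mem_filter.mp hy
              obtain ⟨hyA, hyb⟩ := mem_filter.mp hyS
              exact mem_filter.mpr ⟨hyA, hay, hyb⟩
          have h2 : ∀ a ∈ S, (A.filter fun y => y < a) = S.filter (fun y => y < a) := by
            intro a haf
            obtain ⟨-, halt⟩ := mem_filter.mp haf
            ext y
            constructor
            · intro hy
              obtain ⟨hyA, hya⟩ := mem_filter.mp hy
              exact mem_filter.mpr ⟨mem_filter.mpr ⟨hyA, lt_trans hya halt⟩, hya⟩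
            · intro hy
              obtain ⟨hyS, hya⟩ := mem_filter.mp hy
              exact mem_filter.mpr ⟨(mem_filter.mp hyS).1, hya⟩
          rw [Finset.sum_congr rfl (fun a ha => by rw [h1 a ha, h2 a ha]), rank_sum]
          congr 1
          rw [kk]
          have hBempty : B.filter (fun y => y < b1) = ∅ := by
            ext y
            simp only [mem_filter, notMem_empty, iff_false, not_and]
            intro hy hlt; exact absurd (hb1min y hy) (not_le.mpr hlt)
          rw [hBempty]
          simp [hS]
        rw [hsum]
        exact Finset.mul_prod_erase B (fun b => qint p q (kk A B b)) hb1B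
      · rw [if_neg hguard]
        apply Finset.sum_eq_zero
        intro a haf
        obtain ⟨haA, halt⟩ := mem_filter.mp haf
        rw [ih _ _ hcard_erase, if_neg, mul_zero]
        rw [Finset.card_erase_of_mem haA, Finset.card_erase_of_mem hb1B]
        have c1 : 1 ≤ A.card := Finset.card_pos.mpr ⟨a, haA⟩
        have c2 : 1 ≤ B.card := Finset.card_pos.mpr ⟨b1, hb1B⟩
        omega


def LowSet (C D : Finset (Fin n)) : Finset (Fin n → Fin n) :=
  univ.filter fun l => (∀ j ∈ C, l j ≤ j) ∧ (∀ x, x ∉ C → l x = x) ∧ C.image l = D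
    ∧ Set.InjOn l ↑C

def crosL (C : Finset (Fin n)) (l : Fin n → Fin n) : ℕ :=
  ((C ×ˢ C).filter fun z => l z.1 < l z.2 ∧ l z.2 ≤ z.1 ∧ z.1 < z.2).card

def nestL (C : Finset (Fin n)) (l : Fin n → Fin n) : ℕ :=
  ((C ×ˢ C).filter fun z => l z.2 < l z.1 ∧ l z.1 ≤ z.1 ∧ z.1 < z.2).card

def fixL (C : Finset (Fin n)) (l : Fin n → Fin n) : ℕ := (C.filter fun j => l j = j).card

/-- local factor for the lower system -/
def lfac (p q ρ : ℝ) (C D : Finset (Fin n)) (j : Fin n) : ℝ :=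
  if j ∈ D then ρ * p ^ (kk D C j) + q * qint p q (kk D C j) else qint p q (kk D C j)

lemma lowSet_empty_both : LowSet (∅ : Finset (Fin n)) ∅ = {fun x => x} := by
  ext l
  simp only [LowSet, mem_filter, mem_univ, true_and, mem_singleton]
  constructor
  · rintro ⟨-, h2, -, -⟩
    funext x
    exact h2 x (notMem_empty x)
  · rintro rfl
    exact ⟨by simp, fun x _ => rfl, by simp, by simp [Set.InjOn]⟩

lemma lowSet_empty_right (C : Finset (Fin n)) (hC : C ≠ ∅) : LowSet C ∅ = ∅ := by
  ext l
  simp only [LowSet, mem_filter, mem_univ, true_and, notMem_empty, iff_false, not_and]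
  intro _ _ h3
  exact absurd (Finset.image_eq_empty.mp h3) hC

lemma crosL_empty (l : Fin n → Fin n) : crosL ∅ l = 0 := by simp [crosL]
lemma nestL_empty (l : Fin n → Fin n) : nestL ∅ l = 0 := by simp [nestL]
lemma fixL_empty (l : Fin n → Fin n) : fixL ∅ l = 0 := by simp [fixL]

lemma card_filter_img (C D : Finset (Fin n)) (j1 s : Fin n) (l : Fin n → Fin n)
    (himg : C.image l = D) (hinj : Set.InjOn l ↑C) (hj1 : j1 ∈ C) (hls : l j1 = s)
    (hmin : ∀ c ∈ C, j1 ≤ c) (Q : Fin n → Prop) (hQs : ¬ Q s) :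
    ((C.erase j1).filter fun y => Q (l y)).card = (D.filter fun d => Q d).card := by
  classical
  apply Finset.card_bij (i := fun y _ => l y)
  · intro y hy
    obtain ⟨hyC, hQy⟩ := mem_filter.mp hy
    refine mem_filter.mpr ⟨?_, hQy⟩
    rw [← himg]
    exact Finset.mem_image_of_mem l (Finset.mem_of_mem_erase hyC)
  · intro y1 hy1 y2 hy2 hh
    have h1 := Finset.mem_of_mem_erase (mem_filter.mp hy1).1
    have h2 := Finset.mem_of_mem_erase (mem_filter.mp hy2).1
    exact hinj (Finset.mem_coe.mpr h1) (Finset.mem_coe.mpr h2) hh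
  · intro d hd
    obtain ⟨hdD, hQd⟩ := mem_filter.mp hd
    rw [← himg, Finset.mem_image] at hdD
    obtain ⟨y, hyC, rfl⟩ := hdD
    have hyne : y ≠ j1 := by
      intro hh; subst hh; rw [hls] at hQd; exact hQs hQd
    exact ⟨y, mem_filter.mpr ⟨Finset.mem_erase.mpr ⟨hyne, hyC⟩, hQd⟩, rfl⟩

lemma crosL_step (C D : Finset (Fin n)) (j1 s : Fin n) (l : Fin n → Fin n)
    (hj1 : j1 ∈ C) (hle : ∀ y ∈ C, l y ≤ y) (himg : C.image l = D) (hinj : Set.InjOn l ↑C)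
    (hls : l j1 = s) (hmin : ∀ c ∈ C, j1 ≤ c) :
    crosL C l = (D.filter fun d => s < d ∧ d ≤ j1).card
      + crosL (C.erase j1) (Function.update l j1 j1) := by
  classical
  have hsplit : ((C ×ˢ C).filter fun z => l z.1 < l z.2 ∧ l z.2 ≤ z.1 ∧ z.1 < z.2)
      = (((C.erase j1).filter fun y => s < l y ∧ l y ≤ j1).image (fun y => (j1, y)))
        ∪ (((C.erase j1) ×ˢ (C.erase j1)).filter
            fun z => l z.1 < l z.2 ∧ l z.2 ≤ z.1 ∧ z.1 < z.2) := by
    ext z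
    simp only [mem_filter, mem_union, mem_image, mem_product, mem_erase]
    constructor
    · rintro ⟨⟨hz1, hz2⟩, h1, h2, h3⟩
      by_cases hz1a : z.1 = j1
      · left
        refine ⟨z.2, ⟨⟨?_, hz2⟩, ?_, ?_⟩, ?_⟩
        · intro hh; rw [hz1a, hh] at h3; exact lt_irrefl _ h3
        · rw [← hls, ← hz1a]; exact h1
        · rw [← hz1a]; exact h2
        · rw [← hz1a]
      · right
        have hz2a : z.2 ≠ j1 := by
          intro hh
          have hle2 : z.2 ≤ z.1 := by rw [hh]; exact hmin z.1 hz1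
          exact absurd h3 (not_lt.mpr hle2)
        exact ⟨⟨⟨hz1a, hz1⟩, hz2a, hz2⟩, h1, h2, h3⟩
    · rintro (⟨y, hy, rfl⟩ | ⟨⟨⟨hz1a, hz1⟩, hz2a, hz2⟩, hP⟩)
      · obtain ⟨⟨hyne, hyC⟩, hsy, hyj⟩ := hy
        refine ⟨⟨hj1, hyC⟩, ?_, hyj, ?_⟩
        · rw [hls]; exact hsy
        · exact lt_of_le_of_ne (hmin y hyC) (Ne.symm hyne)
      · exact ⟨⟨hz1, hz2⟩, hP⟩
  have hdis : Disjoint (((C.erase j1).filter fun y => s < l y ∧ l y ≤ j1).image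
      (fun y => (j1, y)))
      (((C.erase j1) ×ˢ (C.erase j1)).filter
        fun z => l z.1 < l z.2 ∧ l z.2 ≤ z.1 ∧ z.1 < z.2) := by
    simp only [disjoint_left, mem_image, mem_filter, mem_product, mem_erase]
    rintro z ⟨y, hy, rfl⟩ ⟨⟨⟨hz1a, -⟩, -⟩, -⟩
    exact hz1a rfl
  rw [crosL, hsplit, card_union_of_disjoint hdis,
    Finset.card_image_of_injective _ (fun y1 y2 hh => (Prod.mk.injEq _ _ _ _ ▸ hh).2)]
  congr 1
  · have hcc := card_filter_img C D j1 s l himg hinj hj1 hls hmin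
      (fun d => s < d ∧ d ≤ j1) (fun hh => lt_irrefl _ hh.1)
    convert hcc using 2 <;> (ext y; simp only [mem_filter])
  · rw [crosL]
    congr 1
    apply Finset.filter_congr
    intro z hz
    simp only [mem_product, mem_erase] at hz
    rw [Function.update_of_ne hz.1.1, Function.update_of_ne hz.2.1]

lemma nestL_step (C D : Finset (Fin n)) (j1 s : Fin n) (l : Fin n → Fin n)
    (hj1 : j1 ∈ C) (hle : ∀ y ∈ C, l y ≤ y) (himg : C.image l = D) (hinj : Set.InjOn l ↑C)
    (hls : l j1 = s) (hmin : ∀ c ∈ C, j1 ≤ c) :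
    nestL C l = (D.filter fun d => d < s).card
      + nestL (C.erase j1) (Function.update l j1 j1) := by
  classical
  have hsplit : ((C ×ˢ C).filter fun z => l z.2 < l z.1 ∧ l z.1 ≤ z.1 ∧ z.1 < z.2)
      = (((C.erase j1).filter fun y => l y < s).image (fun y => (j1, y)))
        ∪ (((C.erase j1) ×ˢ (C.erase j1)).filter
            fun z => l z.2 < l z.1 ∧ l z.1 ≤ z.1 ∧ z.1 < z.2) := by
    ext z
    simp only [mem_filter, mem_union, mem_image, mem_product, mem_erase]
    constructor
    · rintro ⟨⟨hz1, hz2⟩, h1, h2, h3⟩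
      by_cases hz1a : z.1 = j1
      · left
        refine ⟨z.2, ⟨⟨?_, hz2⟩, ?_⟩, ?_⟩
        · intro hh; rw [hz1a, hh] at h3; exact lt_irrefl _ h3
        · rw [← hls, ← hz1a]; exact h1
        · rw [← hz1a]
      · right
        have hz2a : z.2 ≠ j1 := by
          intro hh
          have hle2 : z.2 ≤ z.1 := by rw [hh]; exact hmin z.1 hz1
          exact absurd h3 (not_lt.mpr hle2)
        exact ⟨⟨⟨hz1a, hz1⟩, hz2a, hz2⟩, h1, h2, h3⟩
    · rintro (⟨y, hy, rfl⟩ | ⟨⟨⟨hz1a, hz1⟩, hz2a, hz2⟩, hP⟩)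
      · obtain ⟨⟨hyne, hyC⟩, hys⟩ := hy
        refine ⟨⟨hj1, hyC⟩, ?_, ?_, ?_⟩
        · rw [hls]; exact hys
        · exact hle j1 hj1
        · exact lt_of_le_of_ne (hmin y hyC) (Ne.symm hyne)
      · exact ⟨⟨hz1, hz2⟩, hP⟩
  have hdis : Disjoint (((C.erase j1).filter fun y => l y < s).image (fun y => (j1, y)))
      (((C.erase j1) ×ˢ (C.erase j1)).filter
        fun z => l z.2 < l z.1 ∧ l z.1 ≤ z.1 ∧ z.1 < z.2) := by
    simp only [disjoint_left, mem_image, mem_filter, mem_product, mem_erase]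
    rintro z ⟨y, hy, rfl⟩ ⟨⟨⟨hz1a, -⟩, -⟩, -⟩
    exact hz1a rfl
  rw [nestL, hsplit, card_union_of_disjoint hdis,
    Finset.card_image_of_injective _ (fun y1 y2 hh => (Prod.mk.injEq _ _ _ _ ▸ hh).2)]
  congr 1
  · have hcc := card_filter_img C D j1 s l himg hinj hj1 hls hmin
      (fun d => d < s) (fun hh => lt_irrefl _ hh)
    convert hcc using 2 <;> (ext y; simp only [mem_filter])
  · rw [nestL]
    congr 1
    apply Finset.filter_congr
    intro z hz
    simp only [mem_product, mem_erase] at hz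
    rw [Function.update_of_ne hz.1.1, Function.update_of_ne hz.2.1]

lemma fixL_step (C : Finset (Fin n)) (j1 s : Fin n) (l : Fin n → Fin n)
    (hj1 : j1 ∈ C) (hls : l j1 = s) :
    fixL C l = (if s = j1 then 1 else 0) + fixL (C.erase j1) (Function.update l j1 j1) := by
  classical
  have hsplit : C.filter (fun j => l j = j)
      = (if s = j1 then ({j1} : Finset (Fin n)) else ∅)
        ∪ (C.erase j1).filter (fun j => Function.update l j1 j1 j = j) := by
    ext y
    by_cases hsj : s = j1 <;>
      simp only [hsj, if_true, if_false, mem_union, mem_singleton, mem_filter, mem_erase,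
        notMem_empty, false_or]
    · constructor
      · intro ⟨hyC, hyl⟩
        by_cases hyj : y = j1
        · exact Or.inl hyj
        · exact Or.inr ⟨⟨hyj, hyC⟩, by rw [Function.update_of_ne hyj]; exact hyl⟩
      · rintro (rfl | ⟨⟨hyj, hyC⟩, hyl⟩)
        · exact ⟨hj1, by rw [hls, hsj]⟩
        · exact ⟨hyC, by rw [Function.update_of_ne hyj] at hyl; exact hyl⟩
    · constructor
      · intro ⟨hyC, hyl⟩
        have hyj : y ≠ j1 := by
          intro hh; subst hh; rw [hyl] at hls; exact hsj hls.symm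
        exact ⟨⟨hyj, hyC⟩, by rw [Function.update_of_ne hyj]; exact hyl⟩
      · rintro ⟨⟨hyj, hyC⟩, hyl⟩
        exact ⟨hyC, by rw [Function.update_of_ne hyj] at hyl; exact hyl⟩
  have hdis : Disjoint (if s = j1 then ({j1} : Finset (Fin n)) else ∅)
      ((C.erase j1).filter (fun j => Function.update l j1 j1 j = j)) := by
    by_cases hsj : s = j1 <;> simp only [hsj, if_true, if_false]
    · simp only [disjoint_left, mem_singleton, mem_filter, mem_erase]
      rintro y rfl ⟨⟨hyj, -⟩, -⟩
      exact hyj rfl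
    · exact Finset.disjoint_empty_left _
  rw [fixL, hsplit, card_union_of_disjoint hdis, fixL]
  congr 1
  by_cases hsj : s = j1 <;> simp [hsj]


lemma lowSet_fwd (C D : Finset (Fin n)) (j1 s : Fin n) (l : Fin n → Fin n)
    (hj1 : j1 ∈ C) (hl : l ∈ LowSet C D) (hls : l j1 = s) :
    Function.update l j1 j1 ∈ LowSet (C.erase j1) (D.erase s) := by
  classical
  simp only [LowSet, mem_filter, mem_univ, true_and] at hl ⊢
  obtain ⟨hle, hid, himg, hinj⟩ := hl
  have hmemD : ∀ y ∈ C, l y ∈ D := by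
    intro y hy; rw [← himg]; exact Finset.mem_image_of_mem l hy
  refine ⟨?_, ?_, ?_, ?_⟩
  · intro y hy
    rw [Function.update_of_ne (Finset.ne_of_mem_erase hy)]
    exact hle y (Finset.mem_of_mem_erase hy)
  · intro x hx
    by_cases hxa : x = j1
    · subst hxa; rw [Function.update_self]
    · rw [Function.update_of_ne hxa]
      exact hid x (fun hxC => hx (Finset.mem_erase.mpr ⟨hxa, hxC⟩))
  · ext d
    simp only [Finset.mem_image, Finset.mem_erase]
    constructor
    · rintro ⟨y, hy, rfl⟩
      rw [Function.update_of_ne hy.1]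
      refine ⟨fun hb => hy.1
        (hinj (Finset.mem_coe.mpr hy.2) (Finset.mem_coe.mpr hj1) (by rw [hb, hls])),
        hmemD y hy.2⟩
    · rintro ⟨hdne, hdD⟩
      rw [← himg, Finset.mem_image] at hdD
      obtain ⟨y, hy, rfl⟩ := hdD
      have hyne : y ≠ j1 := fun hh => hdne (by rw [hh, hls])
      exact ⟨y, ⟨hyne, hy⟩, by rw [Function.update_of_ne hyne]⟩
  · intro y1 hy1 y2 hy2 hh
    simp only [Finset.coe_erase, Set.mem_diff, Set.mem_singleton_iff, Finset.mem_coe] at hy1 hy2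
    rw [Function.update_of_ne hy1.2, Function.update_of_ne hy2.2] at hh
    exact hinj (Finset.mem_coe.mpr hy1.1) (Finset.mem_coe.mpr hy2.1) hh

lemma lowSet_bwd (C D : Finset (Fin n)) (j1 s : Fin n) (l' : Fin n → Fin n)
    (hj1 : j1 ∈ C) (hsD : s ∈ D) (hsle : s ≤ j1)
    (hl' : l' ∈ LowSet (C.erase j1) (D.erase s)) :
    Function.update l' j1 s ∈ LowSet C D := by
  classical
  simp only [LowSet, mem_filter, mem_univ, true_and] at hl' ⊢
  obtain ⟨hle, hid, himg, hinj⟩ := hl'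
  have hmemD' : ∀ y ∈ C.erase j1, l' y ∈ D.erase s := by
    intro y hy; rw [← himg]; exact Finset.mem_image_of_mem l' hy
  refine ⟨?_, ?_, ?_, ?_⟩
  · intro y hy
    by_cases hya : y = j1
    · subst hya; rw [Function.update_self]; exact hsle
    · rw [Function.update_of_ne hya]
      exact hle y (Finset.mem_erase.mpr ⟨hya, hy⟩)
  · intro x hx
    have hxa : x ≠ j1 := fun hh => hx (hh ▸ hj1)
    rw [Function.update_of_ne hxa]
    exact hid x (fun hxC => hx (Finset.mem_of_mem_erase hxC))
  · ext d
    simp only [Finset.mem_image]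
    constructor
    · rintro ⟨y, hy, rfl⟩
      by_cases hya : y = j1
      · subst hya; rw [Function.update_self]; exact hsD
      · rw [Function.update_of_ne hya]
        exact Finset.mem_of_mem_erase (hmemD' y (Finset.mem_erase.mpr ⟨hya, hy⟩))
    · intro hdD
      by_cases hds : d = s
      · exact ⟨j1, hj1, by rw [Function.update_self, hds]⟩
      · have hmem : d ∈ D.erase s := Finset.mem_erase.mpr ⟨hds, hdD⟩
        rw [← himg, Finset.mem_image] at hmem
        obtain ⟨y, hy, rfl⟩ := hmem
        exact ⟨y, Finset.mem_of_mem_erase hy,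
          by rw [Function.update_of_ne (Finset.ne_of_mem_erase hy)]⟩
  · intro y1 hy1 y2 hy2 hh
    simp only [Finset.mem_coe] at hy1 hy2
    by_cases h1a : y1 = j1 <;> by_cases h2a : y2 = j1
    · rw [h1a, h2a]
    · subst h1a
      rw [Function.update_self, Function.update_of_ne h2a] at hh
      have := hmemD' y2 (Finset.mem_erase.mpr ⟨h2a, hy2⟩)
      rw [← hh] at this
      exact absurd rfl (Finset.ne_of_mem_erase this)
    · subst h2a
      rw [Function.update_self, Function.update_of_ne h1a] at hh
      have := hmemD' y1 (Finset.mem_erase.mpr ⟨h1a, hy1⟩)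
      rw [hh] at this
      exact absurd rfl (Finset.ne_of_mem_erase this)
    · rw [Function.update_of_ne h1a, Function.update_of_ne h2a] at hh
      exact hinj (Finset.mem_coe.mpr (Finset.mem_erase.mpr ⟨h1a, hy1⟩))
        (Finset.mem_coe.mpr (Finset.mem_erase.mpr ⟨h2a, hy2⟩)) hh

lemma lowSum (p q ρ : ℝ) : ∀ (N : ℕ) (C D : Finset (Fin n)), C.card ≤ N →
    ∑ l ∈ LowSet C D, q ^ crosL C l * p ^ nestL C l * ρ ^ fixL C l =
      if C.card = D.card then ∏ j ∈ C, lfac p q ρ C D j else 0 := by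
  intro N
  induction N with
  | zero =>
    intro C D hC
    have hCe : C = ∅ := Finset.card_eq_zero.mp (Nat.le_zero.mp hC)
    subst hCe
    by_cases hD : D = ∅
    · subst hD
      rw [lowSet_empty_both]
      simp [crosL_empty, nestL_empty, fixL_empty]
    · have hDne : D.card ≠ 0 := by simpa [Finset.card_eq_zero] using hD
      have : LowSet (∅ : Finset (Fin n)) D = ∅ := by
        ext l
        simp only [LowSet, mem_filter, mem_univ, true_and, notMem_empty, iff_false, not_and]
        intro _ _ h3
        rw [Finset.image_empty] at h3
        exact absurd h3.symm (by simpa [eq_comm] using hD)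
      rw [this]
      simp [hDne.symm]
  | succ N ih =>
    intro C D hC
    by_cases hCe : C = ∅
    · subst hCe
      by_cases hD : D = ∅
      · subst hD
        rw [lowSet_empty_both]
        simp [crosL_empty, nestL_empty, fixL_empty]
      · have hDne : D.card ≠ 0 := by simpa [Finset.card_eq_zero] using hD
        have : LowSet (∅ : Finset (Fin n)) D = ∅ := by
          ext l
          simp only [LowSet, mem_filter, mem_univ, true_and, notMem_empty, iff_false, not_and]
          intro _ _ h3
          rw [Finset.image_empty] at h3
          exact absurd h3.symm (by simpa [eq_comm] using hD)
        rw [this]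
        simp [hDne.symm]
    · have hCne : C.Nonempty := Finset.nonempty_iff_ne_empty.mpr hCe
      set j1 := C.min' hCne with hj1def
      have hj1C : j1 ∈ C := C.min'_mem hCne
      have hmin : ∀ c ∈ C, j1 ≤ c := fun c hc => C.min'_le c hc
      have hpart : LowSet C D = (D.filter (fun d => d ≤ j1)).biUnion
          (fun s => (LowSet C D).filter (fun l => l j1 = s)) := by
        ext l
        simp only [mem_biUnion, mem_filter]
        constructor
        · intro hl
          have hl' := hl
          simp only [LowSet, mem_filter, mem_univ, true_and] at hl'
          obtain ⟨hle, hid, himg, hinj⟩ := hl'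
          refine ⟨l j1, ⟨?_, hle j1 hj1C⟩, hl, rfl⟩
          rw [← himg]; exact Finset.mem_image_of_mem l hj1C
        · rintro ⟨s, -, hl, -⟩; exact hl
      have hdisj : (↑(D.filter (fun d => d ≤ j1)) : Set (Fin n)).PairwiseDisjoint
          (fun s => (LowSet C D).filter (fun l => l j1 = s)) := by
        intro s1 h1 s2 h2 hne
        simp only [Function.onFun, Finset.disjoint_left, mem_filter]
        rintro l ⟨-, hl1⟩ ⟨-, hl2⟩
        exact hne (by rw [← hl1, ← hl2])
      rw [hpart, Finset.sum_biUnion hdisj]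
      have hinner : ∀ s ∈ D.filter (fun d => d ≤ j1),
          ∑ l ∈ (LowSet C D).filter (fun l => l j1 = s),
            q ^ crosL C l * p ^ nestL C l * ρ ^ fixL C l
          = (q ^ (D.filter fun d => s < d ∧ d ≤ j1).card
              * p ^ (D.filter fun d => d < s).card
              * ρ ^ (if s = j1 then 1 else 0))
            * ∑ l' ∈ LowSet (C.erase j1) (D.erase s),
                q ^ crosL (C.erase j1) l' * p ^ nestL (C.erase j1) l'
                  * ρ ^ fixL (C.erase j1) l' := by
        intro s hsf
        obtain ⟨hsD, hsle⟩ := mem_filter.mp hsf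
        rw [Finset.mul_sum]
        refine Finset.sum_nbij' (i := fun l => Function.update l j1 j1)
          (j := fun l' => Function.update l' j1 s) ?_ ?_ ?_ ?_ ?_
        · intro l hl
          obtain ⟨hlL, hls⟩ := mem_filter.mp hl
          exact lowSet_fwd C D j1 s l hj1C hlL hls
        · intro l' hl'
          exact mem_filter.mpr ⟨lowSet_bwd C D j1 s l' hj1C hsD hsle hl',
            Function.update_self j1 s l'⟩
        · intro l hl
          obtain ⟨hlL, hls⟩ := mem_filter.mp hl
          funext xx
          by_cases hxa : xx = j1
          · subst hxa; simp [Function.update_self, hls]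
          · simp [Function.update_of_ne hxa]
        · intro l' hl'
          simp only [LowSet, mem_filter, mem_univ, true_and] at hl'
          funext xx
          by_cases hxa : xx = j1
          · subst hxa
            simp only [Function.update_self]
            exact (hl'.2.1 j1 (Finset.notMem_erase j1 C)).symm
          · simp [Function.update_of_ne hxa]
        · intro l hl
          obtain ⟨hlL, hls⟩ := mem_filter.mp hl
          simp only [LowSet, mem_filter, mem_univ, true_and] at hlL
          obtain ⟨hle, hid, himg, hinj⟩ := hlL
          rw [crosL_step C D j1 s l hj1C hle himg hinj hls hmin,
              nestL_step C D j1 s l hj1C hle himg hinj hls hmin,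
              fixL_step C j1 s l hj1C hls, pow_add, pow_add, pow_add]
          ring
      rw [Finset.sum_congr rfl hinner]
      have hcard_erase : (C.erase j1).card ≤ N := by
        rw [Finset.card_erase_of_mem hj1C]; omega
      have hlf : ∀ s ∈ D.filter (fun d => d ≤ j1), ∀ j ∈ C.erase j1,
          lfac p q ρ (C.erase j1) (D.erase s) j = lfac p q ρ C D j := by
        intro s hsf j hj
        obtain ⟨hsD, hsle⟩ := mem_filter.mp hsf
        obtain ⟨hjne, hjC⟩ := Finset.mem_erase.mp hj
        have hj1j : j1 < j := lt_of_le_of_ne (hmin j hjC) (Ne.symm hjne)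
        have hkk2 : kk (D.erase s) (C.erase j1) j = kk D C j :=
          kk_stable D C s j1 j hsD hj1C hsle hj1j
        have hmem : (j ∈ D.erase s) ↔ (j ∈ D) := by
          constructor
          · exact Finset.mem_of_mem_erase
          · intro hjD
            refine Finset.mem_erase.mpr ⟨?_, hjD⟩
            intro hh
            rw [hh] at hj1j
            exact absurd (lt_of_le_of_lt hsle hj1j) (lt_irrefl s)
        by_cases hjD : j ∈ D
        · rw [lfac, lfac, if_pos (hmem.mpr hjD), if_pos hjD, hkk2]
        · rw [lfac, lfac, if_neg (fun hh => hjD (hmem.mp hh)), if_neg hjD, hkk2]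
      by_cases hguard : C.card = D.card
      · have hstep : ∀ s ∈ D.filter (fun d => d ≤ j1),
            (q ^ (D.filter fun d => s < d ∧ d ≤ j1).card
              * p ^ (D.filter fun d => d < s).card
              * ρ ^ (if s = j1 then 1 else 0))
            * (∑ l' ∈ LowSet (C.erase j1) (D.erase s),
                q ^ crosL (C.erase j1) l' * p ^ nestL (C.erase j1) l'
                  * ρ ^ fixL (C.erase j1) l')
            = (q ^ (D.filter fun d => s < d ∧ d ≤ j1).card
              * p ^ (D.filter fun d => d < s).card
              * ρ ^ (if s = j1 then 1 else 0))
              * ∏ j ∈ C.erase j1, lfac p q ρ C D j := by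
          intro s hsf
          obtain ⟨hsD, hsle⟩ := mem_filter.mp hsf
          rw [ih _ _ hcard_erase, if_pos (show (C.erase j1).card = (D.erase s).card by
            rw [Finset.card_erase_of_mem hj1C, Finset.card_erase_of_mem hsD, hguard])]
          congr 1
          exact Finset.prod_congr rfl (hlf s hsf)
        rw [Finset.sum_congr rfl hstep, ← Finset.sum_mul, if_pos hguard]
        have hCfe : C.filter (fun y => y < j1) = ∅ := by
          ext y
          simp only [mem_filter, notMem_empty, iff_false, not_and]
          intro hy hlt; exact absurd (hmin y hy) (not_le.mpr hlt)
        have hkkj1 : kk D C j1 = (D.filter (fun y => y < j1)).card := by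
          rw [kk, hCfe]; simp
        have hsum : ∑ s ∈ D.filter (fun d => d ≤ j1),
            q ^ (D.filter fun d => s < d ∧ d ≤ j1).card
              * p ^ (D.filter fun d => d < s).card
              * ρ ^ (if s = j1 then 1 else 0)
            = lfac p q ρ C D j1 := by
          set S := D.filter (fun y => y < j1) with hS
          by_cases hjD : j1 ∈ D
          · have hfilt : D.filter (fun d => d ≤ j1) = insert j1 S := by
              ext d
              simp only [hS, mem_insert, mem_filter]
              constructor
              · rintro ⟨hdD, hdle⟩
                rcases lt_or_eq_of_le hdle with hlt | heq
                · exact Or.inr ⟨hdD, hlt⟩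
                · exact Or.inl heq
              · rintro (rfl | ⟨hdD, hlt⟩)
                · exact ⟨hjD, le_refl _⟩
                · exact ⟨hdD, le_of_lt hlt⟩
            have hj1nS : j1 ∉ S := by
              simp only [hS, mem_filter]
              rintro ⟨-, hh⟩; exact lt_irrefl _ hh
            rw [hfilt, Finset.sum_insert hj1nS]
            have hterm1 : q ^ (D.filter fun d => j1 < d ∧ d ≤ j1).card
                * p ^ (D.filter fun d => d < j1).card * ρ ^ (if j1 = j1 then 1 else 0)
                = ρ * p ^ S.card := by
              have : (D.filter fun d => j1 < d ∧ d ≤ j1) = ∅ := by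
                ext d
                simp only [mem_filter, notMem_empty, iff_false, not_and]
                rintro - hh
                exact not_le.mpr hh
              rw [this, if_pos rfl]
              simp [hS]
              ring
            have hterm2 : ∀ s ∈ S,
                q ^ (D.filter fun d => s < d ∧ d ≤ j1).card
                  * p ^ (D.filter fun d => d < s).card * ρ ^ (if s = j1 then 1 else 0)
                = q * (q ^ (S.filter (fun y => s < y)).card
                    * p ^ (S.filter (fun y => y < s)).card) := by
              intro s hs
              obtain ⟨hsD, hslt⟩ := mem_filter.mp (hS ▸ hs)
              have hsnej : s ≠ j1 := ne_of_lt hslt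
              have hf1 : (D.filter fun d => s < d ∧ d ≤ j1)
                  = insert j1 (S.filter (fun y => s < y)) := by
                ext d
                simp only [hS, mem_insert, mem_filter, Finset.filter_filter]
                constructor
                · rintro ⟨hdD, hsd, hdj⟩
                  rcases lt_or_eq_of_le hdj with hlt | heq
                  · exact Or.inr ⟨hdD, hlt, hsd⟩
                  · exact Or.inl heq
                · rintro (rfl | ⟨hdD, hlt, hsd⟩)
                  · exact ⟨hjD, hslt, le_refl _⟩
                  · exact ⟨hdD, hsd, le_of_lt hlt⟩
              have hj1nSf : j1 ∉ S.filter (fun y => s < y) := by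
                intro hh
                exact hj1nS (mem_filter.mp hh).1
              have hf2 : (D.filter fun d => d < s) = S.filter (fun y => y < s) := by
                ext d
                simp only [hS, mem_filter, Finset.filter_filter]
                constructor
                · rintro ⟨hdD, hds⟩
                  exact ⟨hdD, lt_trans hds hslt, hds⟩
                · rintro ⟨hdD, -, hds⟩
                  exact ⟨hdD, hds⟩
              rw [hf1, hf2, Finset.card_insert_of_notMem hj1nSf, if_neg hsnej]
              ring
            rw [hterm1, Finset.sum_congr rfl hterm2, ← Finset.mul_sum, rank_sum,
              lfac, if_pos hjD, hkkj1]
          · have hfilt : D.filter (fun d => d ≤ j1) = S := by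
              ext d
              simp only [hS, mem_filter]
              constructor
              · rintro ⟨hdD, hdle⟩
                rcases lt_or_eq_of_le hdle with hlt | heq
                · exact ⟨hdD, hlt⟩
                · exact absurd (heq ▸ hdD) hjD
              · rintro ⟨hdD, hlt⟩
                exact ⟨hdD, le_of_lt hlt⟩
            have hterm2 : ∀ s ∈ S,
                q ^ (D.filter fun d => s < d ∧ d ≤ j1).card
                  * p ^ (D.filter fun d => d < s).card * ρ ^ (if s = j1 then 1 else 0)
                = q ^ (S.filter (fun y => s < y)).card
                    * p ^ (S.filter (fun y => y < s)).card := by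
              intro s hs
              obtain ⟨hsD, hslt⟩ := mem_filter.mp (hS ▸ hs)
              have hsnej : s ≠ j1 := ne_of_lt hslt
              have hf1 : (D.filter fun d => s < d ∧ d ≤ j1) = S.filter (fun y => s < y) := by
                ext d
                simp only [hS, mem_filter, Finset.filter_filter]
                constructor
                · rintro ⟨hdD, hsd, hdj⟩
                  rcases lt_or_eq_of_le hdj with hlt | heq
                  · exact ⟨hdD, hlt, hsd⟩
                  · exact absurd (heq ▸ hdD) hjD
                · rintro ⟨hdD, hlt, hsd⟩
                  exact ⟨hdD, hsd, le_of_lt hlt⟩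
              have hf2 : (D.filter fun d => d < s) = S.filter (fun y => y < s) := by
                ext d
                simp only [hS, mem_filter, Finset.filter_filter]
                constructor
                · rintro ⟨hdD, hds⟩
                  exact ⟨hdD, lt_trans hds hslt, hds⟩
                · rintro ⟨hdD, -, hds⟩
                  exact ⟨hdD, hds⟩
              rw [hf1, hf2, if_neg hsnej]
              ring
            rw [hfilt, Finset.sum_congr rfl hterm2, rank_sum, lfac, if_neg hjD, hkkj1]
        rw [hsum]
        exact Finset.mul_prod_erase C (fun j => lfac p q ρ C D j) hj1C
      · rw [if_neg hguard]
        apply Finset.sum_eq_zero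
        intro s hsf
        obtain ⟨hsD, hsle⟩ := mem_filter.mp hsf
        have c1 : 1 ≤ C.card := Finset.card_pos.mpr ⟨j1, hj1C⟩
        have c2 : 1 ≤ D.card := Finset.card_pos.mpr ⟨s, hsD⟩
        rw [ih _ _ hcard_erase, if_neg (show ¬ (C.erase j1).card = (D.erase s).card by
          rw [Finset.card_erase_of_mem hj1C, Finset.card_erase_of_mem hsD]; omega), mul_zero]


-- the two sets attached to a permutation
def Aset (σ : Equiv.Perm (Fin n)) : Finset (Fin n) := univ.filter fun i => i < σ i
def Bset (σ : Equiv.Perm (Fin n)) : Finset (Fin n) := univ.filter fun x => σ⁻¹ x < x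

def uOf (A : Finset (Fin n)) (σ : Equiv.Perm (Fin n)) : Fin n → Fin n :=
  fun x => if x ∈ A then σ x else x
def lOf (A : Finset (Fin n)) (σ : Equiv.Perm (Fin n)) : Fin n → Fin n :=
  fun x => if x ∈ A then x else σ x

lemma Bset_eq_image (σ : Equiv.Perm (Fin n)) : (Aset σ).image σ = Bset σ := by
  ext x
  simp only [Aset, Bset, mem_image, mem_filter, mem_univ, true_and]
  constructor
  · rintro ⟨a, ha, rfl⟩
    rwa [perm_inv_apply_self]
  · intro hx
    exact ⟨σ⁻¹ x, by rwa [perm_apply_inv_self], by rw [perm_apply_inv_self]⟩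

lemma mem_Aset {σ : Equiv.Perm (Fin n)} {x : Fin n} : x ∈ Aset σ ↔ x < σ x := by
  simp [Aset]

lemma mem_Bset {σ : Equiv.Perm (Fin n)} {x : Fin n} : x ∈ Bset σ ↔ σ⁻¹ x < x := by
  simp [Bset]

lemma uOf_pos {A : Finset (Fin n)} {σ : Equiv.Perm (Fin n)} {x : Fin n} (h : x ∈ A) :
    uOf A σ x = σ x := if_pos h
lemma uOf_neg {A : Finset (Fin n)} {σ : Equiv.Perm (Fin n)} {x : Fin n} (h : x ∉ A) :
    uOf A σ x = x := if_neg h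
lemma lOf_pos {A : Finset (Fin n)} {σ : Equiv.Perm (Fin n)} {x : Fin n} (h : x ∈ A) :
    lOf A σ x = x := if_pos h
lemma lOf_neg {A : Finset (Fin n)} {σ : Equiv.Perm (Fin n)} {x : Fin n} (h : x ∉ A) :
    lOf A σ x = σ x := if_neg h

lemma exc_eq (σ : Equiv.Perm (Fin n)) : exc σ = (Aset σ).card := rfl

lemma cpk_eq (σ : Equiv.Perm (Fin n)) : cpk σ = (Bset σ \ Aset σ).card := by
  rw [cpk]
  congr 1
  ext x
  simp only [mem_sdiff, mem_filter, mem_univ, true_and, mem_Aset, mem_Bset]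
  constructor
  · rintro ⟨h1, h2⟩
    exact ⟨h1, not_lt.mpr (le_of_lt h2)⟩
  · rintro ⟨h1, h2⟩
    refine ⟨h1, lt_of_le_of_ne (not_lt.mp h2) ?_⟩
    intro hh
    have hinv : σ⁻¹ x = x := by
      apply σ.injective
      rw [perm_apply_inv_self, hh]
    rw [hinv] at h1
    exact lt_irrefl x h1

lemma uOf_mem (σ : Equiv.Perm (Fin n)) : uOf (Aset σ) σ ∈ UpSet (Aset σ) (Bset σ) := by
  simp only [UpSet, mem_filter, mem_univ, true_and]
  refine ⟨?_, ?_, ?_, ?_⟩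
  · intro a ha
    rw [uOf_pos ha]
    exact mem_Aset.mp ha
  · intro x hx
    exact uOf_neg hx
  · rw [← Bset_eq_image σ]
    apply Finset.image_congr
    intro a ha
    exact uOf_pos (Finset.mem_coe.mp ha)
  · intro y1 hy1 y2 hy2 hh
    rw [uOf_pos (Finset.mem_coe.mp hy1), uOf_pos (Finset.mem_coe.mp hy2)] at hh
    exact σ.injective hh

lemma image_compl (σ : Equiv.Perm (Fin n)) : (Aset σ)ᶜ.image σ = (Bset σ)ᶜ := by
  ext x
  simp only [mem_image, Finset.mem_compl]
  constructor
  · rintro ⟨a, ha, rfl⟩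
    intro hB
    apply ha
    rw [← Bset_eq_image, mem_image] at hB
    obtain ⟨a2, ha2, heq⟩ := hB
    rwa [σ.injective heq] at ha2
  · intro hx
    refine ⟨σ⁻¹ x, ?_, by rw [perm_apply_inv_self]⟩
    intro hA
    apply hx
    rw [← Bset_eq_image, mem_image]
    exact ⟨σ⁻¹ x, hA, by rw [perm_apply_inv_self]⟩

lemma lOf_mem (σ : Equiv.Perm (Fin n)) : lOf (Aset σ) σ ∈ LowSet (Aset σ)ᶜ (Bset σ)ᶜ := by
  simp only [LowSet, mem_filter, mem_univ, true_and]
  refine ⟨?_, ?_, ?_, ?_⟩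
  · intro j hj
    have hjA := Finset.mem_compl.mp hj
    rw [lOf_neg hjA]
    exact not_lt.mp (fun hc => hjA (mem_Aset.mpr hc))
  · intro x hx
    rw [Finset.mem_compl, not_not] at hx
    exact lOf_pos hx
  · rw [← image_compl σ]
    apply Finset.image_congr
    intro a ha
    exact lOf_neg (Finset.mem_compl.mp (Finset.mem_coe.mp ha))
  · intro y1 hy1 y2 hy2 hh
    rw [lOf_neg (Finset.mem_compl.mp (Finset.mem_coe.mp hy1)),
      lOf_neg (Finset.mem_compl.mp (Finset.mem_coe.mp hy2))] at hh
    exact σ.injective hh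

lemma cros_split (σ : Equiv.Perm (Fin n)) :
    cros σ = crosU (Aset σ) (uOf (Aset σ) σ) + crosL (Aset σ)ᶜ (lOf (Aset σ) σ) := by
  classical
  have hsplit : (univ.filter fun p : Fin n × Fin n =>
      (p.2 < p.1 ∧ p.1 < σ p.2 ∧ σ p.2 < σ p.1) ∨
      (σ p.1 < σ p.2 ∧ σ p.2 ≤ p.1 ∧ p.1 < p.2))
      = ((Aset σ ×ˢ Aset σ).filter fun z => z.2 < z.1 ∧ z.1 < uOf (Aset σ) σ z.2
          ∧ uOf (Aset σ) σ z.2 < uOf (Aset σ) σ z.1)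
        ∪ (((Aset σ)ᶜ ×ˢ (Aset σ)ᶜ).filter fun z => lOf (Aset σ) σ z.1 < lOf (Aset σ) σ z.2
          ∧ lOf (Aset σ) σ z.2 ≤ z.1 ∧ z.1 < z.2) := by
    ext z
    simp only [mem_filter, mem_univ, true_and, mem_union, mem_product, Finset.mem_compl]
    constructor
    · rintro (⟨h1, h2, h3⟩ | ⟨h1, h2, h3⟩)
      · have hz2m : z.2 ∈ Aset σ := mem_Aset.mpr (lt_trans h1 h2)
        have hz1m : z.1 ∈ Aset σ := mem_Aset.mpr (lt_trans h2 h3)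
        left
        refine ⟨⟨hz1m, hz2m⟩, h1, ?_, ?_⟩
        · rw [uOf_pos hz2m]; exact h2
        · rw [uOf_pos hz2m, uOf_pos hz1m]; exact h3
      · have hz1m : z.1 ∉ Aset σ := fun hc =>
          absurd (mem_Aset.mp hc) (not_lt.mpr (le_of_lt (lt_of_lt_of_le h1 h2)))
        have hz2m : z.2 ∉ Aset σ := fun hc =>
          absurd (mem_Aset.mp hc) (not_lt.mpr (le_of_lt (lt_of_le_of_lt h2 h3)))
        right
        refine ⟨⟨hz1m, hz2m⟩, ?_, ?_, h3⟩
        · rw [lOf_neg hz1m, lOf_neg hz2m]; exact h1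
        · rw [lOf_neg hz2m]; exact h2
    · rintro (⟨⟨hz1m, hz2m⟩, h1, h2, h3⟩ | ⟨⟨hz1m, hz2m⟩, h1, h2, h3⟩)
      · rw [uOf_pos hz2m] at h2
        rw [uOf_pos hz2m, uOf_pos hz1m] at h3
        exact Or.inl ⟨h1, h2, h3⟩
      · rw [lOf_neg hz1m, lOf_neg hz2m] at h1
        rw [lOf_neg hz2m] at h2
        exact Or.inr ⟨h1, h2, h3⟩
  have hdis : Disjoint
      ((Aset σ ×ˢ Aset σ).filter fun z => z.2 < z.1 ∧ z.1 < uOf (Aset σ) σ z.2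
          ∧ uOf (Aset σ) σ z.2 < uOf (Aset σ) σ z.1)
      (((Aset σ)ᶜ ×ˢ (Aset σ)ᶜ).filter fun z => lOf (Aset σ) σ z.1 < lOf (Aset σ) σ z.2
          ∧ lOf (Aset σ) σ z.2 ≤ z.1 ∧ z.1 < z.2) := by
    simp only [disjoint_left, mem_filter, mem_product, Finset.mem_compl]
    rintro z ⟨⟨hz1, -⟩, -⟩ ⟨⟨hz1c, -⟩, -⟩
    exact hz1c hz1
  rw [cros, hsplit, card_union_of_disjoint hdis]
  rfl

lemma nest_split (σ : Equiv.Perm (Fin n)) :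
    nest σ = nestU (Aset σ) (uOf (Aset σ) σ) + nestL (Aset σ)ᶜ (lOf (Aset σ) σ) := by
  classical
  have hsplit : (univ.filter fun p : Fin n × Fin n =>
      (p.2 < p.1 ∧ p.1 < σ p.1 ∧ σ p.1 < σ p.2) ∨
      (σ p.2 < σ p.1 ∧ σ p.1 ≤ p.1 ∧ p.1 < p.2))
      = ((Aset σ ×ˢ Aset σ).filter fun z => z.2 < z.1 ∧ z.1 < uOf (Aset σ) σ z.1
          ∧ uOf (Aset σ) σ z.1 < uOf (Aset σ) σ z.2)
        ∪ (((Aset σ)ᶜ ×ˢ (Aset σ)ᶜ).filter fun z => lOf (Aset σ) σ z.2 < lOf (Aset σ) σ z.1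
          ∧ lOf (Aset σ) σ z.1 ≤ z.1 ∧ z.1 < z.2) := by
    ext z
    simp only [mem_filter, mem_univ, true_and, mem_union, mem_product, Finset.mem_compl]
    constructor
    · rintro (⟨h1, h2, h3⟩ | ⟨h1, h2, h3⟩)
      · have hz1m : z.1 ∈ Aset σ := mem_Aset.mpr h2
        have hz2m : z.2 ∈ Aset σ := mem_Aset.mpr (lt_trans (lt_trans h1 h2) h3)
        left
        refine ⟨⟨hz1m, hz2m⟩, h1, ?_, ?_⟩
        · rw [uOf_pos hz1m]; exact h2
        · rw [uOf_pos hz1m, uOf_pos hz2m]; exact h3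
      · have hz1m : z.1 ∉ Aset σ := fun hc =>
          absurd (mem_Aset.mp hc) (not_lt.mpr h2)
        have hz2m : z.2 ∉ Aset σ := fun hc =>
          absurd (mem_Aset.mp hc) (not_lt.mpr (le_of_lt
            (lt_of_lt_of_le (lt_of_lt_of_le h1 h2) (le_of_lt h3))))
        right
        refine ⟨⟨hz1m, hz2m⟩, ?_, ?_, h3⟩
        · rw [lOf_neg hz1m, lOf_neg hz2m]; exact h1
        · rw [lOf_neg hz1m]; exact h2
    · rintro (⟨⟨hz1m, hz2m⟩, h1, h2, h3⟩ | ⟨⟨hz1m, hz2m⟩, h1, h2, h3⟩)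
      · rw [uOf_pos hz1m] at h2
        rw [uOf_pos hz1m, uOf_pos hz2m] at h3
        exact Or.inl ⟨h1, h2, h3⟩
      · rw [lOf_neg hz1m, lOf_neg hz2m] at h1
        rw [lOf_neg hz1m] at h2
        exact Or.inr ⟨h1, h2, h3⟩
  have hdis : Disjoint
      ((Aset σ ×ˢ Aset σ).filter fun z => z.2 < z.1 ∧ z.1 < uOf (Aset σ) σ z.1
          ∧ uOf (Aset σ) σ z.1 < uOf (Aset σ) σ z.2)
      (((Aset σ)ᶜ ×ˢ (Aset σ)ᶜ).filter fun z => lOf (Aset σ) σ z.2 < lOf (Aset σ) σ z.1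
          ∧ lOf (Aset σ) σ z.1 ≤ z.1 ∧ z.1 < z.2) := by
    simp only [disjoint_left, mem_filter, mem_product, Finset.mem_compl]
    rintro z ⟨⟨hz1, -⟩, -⟩ ⟨⟨hz1c, -⟩, -⟩
    exact hz1c hz1
  rw [nest, hsplit, card_union_of_disjoint hdis]
  rfl

lemma fixc_split (σ : Equiv.Perm (Fin n)) :
    fixc σ = fixL (Aset σ)ᶜ (lOf (Aset σ) σ) := by
  rw [fixc, fixL]
  congr 1
  ext j
  simp only [mem_filter, mem_univ, true_and, Finset.mem_compl]
  constructor
  · intro hj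
    have hjA : j ∉ Aset σ := fun hc => absurd (mem_Aset.mp hc) (by rw [hj]; exact lt_irrefl j)
    exact ⟨hjA, by rw [lOf_neg hjA]; exact hj⟩
  · rintro ⟨hjA, hj⟩
    rw [lOf_neg hjA] at hj
    exact hj


def combine (A : Finset (Fin n)) (u l : Fin n → Fin n) : Fin n → Fin n :=
  fun x => if x ∈ A then u x else l x

lemma combine_pos {A : Finset (Fin n)} {u l : Fin n → Fin n} {x : Fin n} (h : x ∈ A) :
    combine A u l x = u x := if_pos h
lemma combine_neg {A : Finset (Fin n)} {u l : Fin n → Fin n} {x : Fin n} (h : x ∉ A) :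
    combine A u l x = l x := if_neg h

def permOf (A : Finset (Fin n)) (u l : Fin n → Fin n) : Equiv.Perm (Fin n) :=
  if h : Function.Bijective (combine A u l) then Equiv.ofBijective _ h else 1

lemma permOf_apply {A : Finset (Fin n)} {u l : Fin n → Fin n}
    (h : Function.Bijective (combine A u l)) (x : Fin n) :
    permOf A u l x = combine A u l x := by
  rw [permOf, dif_pos h]
  rfl

lemma combine_bijective (A B : Finset (Fin n)) (u l : Fin n → Fin n)
    (hu : u ∈ UpSet A B) (hl : l ∈ LowSet Aᶜ Bᶜ) :
    Function.Bijective (combine A u l) := by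
  classical
  simp only [UpSet, mem_filter, mem_univ, true_and] at hu
  simp only [LowSet, mem_filter, mem_univ, true_and] at hl
  obtain ⟨hugt, huid, huimg, huinj⟩ := hu
  obtain ⟨hlle, hlid, hlimg, hlinj⟩ := hl
  rw [Fintype.bijective_iff_injective_and_card]
  refine ⟨?_, rfl⟩
  intro x y hxy
  by_cases hx : x ∈ A <;> by_cases hy : y ∈ A
  · rw [combine_pos hx, combine_pos hy] at hxy
    exact huinj (Finset.mem_coe.mpr hx) (Finset.mem_coe.mpr hy) hxy
  · rw [combine_pos hx, combine_neg hy] at hxy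
    have h1 : u x ∈ B := by rw [← huimg]; exact Finset.mem_image_of_mem u hx
    have h2 : l y ∈ Bᶜ := by
      rw [← hlimg]
      exact Finset.mem_image_of_mem l (Finset.mem_compl.mpr hy)
    rw [hxy] at h1
    exact absurd h1 (Finset.mem_compl.mp h2)
  · rw [combine_neg hx, combine_pos hy] at hxy
    have h1 : u y ∈ B := by rw [← huimg]; exact Finset.mem_image_of_mem u hy
    have h2 : l x ∈ Bᶜ := by
      rw [← hlimg]
      exact Finset.mem_image_of_mem l (Finset.mem_compl.mpr hx)
    rw [← hxy] at h1
    exact absurd h1 (Finset.mem_compl.mp h2)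
  · rw [combine_neg hx, combine_neg hy] at hxy
    exact hlinj (Finset.mem_coe.mpr (Finset.mem_compl.mpr hx))
      (Finset.mem_coe.mpr (Finset.mem_compl.mpr hy)) hxy

lemma fiber_split (p q ρ : ℝ) (A B : Finset (Fin n)) :
    ∑ σ ∈ (univ : Finset (Equiv.Perm (Fin n))).filter
        (fun σ => Aset σ = A ∧ Bset σ = B),
      q ^ cros σ * p ^ nest σ * ρ ^ fixc σ
    = (∑ u ∈ UpSet A B, q ^ crosU A u * p ^ nestU A u)
      * (∑ l ∈ LowSet Aᶜ Bᶜ, q ^ crosL Aᶜ l * p ^ nestL Aᶜ l * ρ ^ fixL Aᶜ l) := by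
  classical
  rw [Finset.sum_mul_sum, ← Finset.sum_product']
  refine Finset.sum_nbij' (i := fun σ => (uOf A σ, lOf A σ))
    (j := fun z => permOf A z.1 z.2) ?_ ?_ ?_ ?_ ?_
  · intro σ hσ
    obtain ⟨hA, hB⟩ := (mem_filter.mp hσ).2
    rw [Finset.mem_product]
    subst hA; subst hB
    exact ⟨uOf_mem σ, lOf_mem σ⟩
  · intro z hz
    rw [Finset.mem_product] at hz
    obtain ⟨hu, hl⟩ := hz
    have hbij := combine_bijective A B z.1 z.2 hu hl
    simp only [UpSet, mem_filter, mem_univ, true_and] at hu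
    simp only [LowSet, mem_filter, mem_univ, true_and] at hl
    have hA : Aset (permOf A z.1 z.2) = A := by
      ext x
      rw [mem_Aset, permOf_apply hbij]
      constructor
      · intro hlt
        by_contra hx
        rw [combine_neg hx] at hlt
        exact absurd hlt (not_lt.mpr (hl.1 x (Finset.mem_compl.mpr hx)))
      · intro hx
        rw [combine_pos hx]
        exact hu.1 x hx
    refine mem_filter.mpr ⟨mem_univ _, hA, ?_⟩
    rw [← Bset_eq_image, hA, ← hu.2.2.1]
    apply Finset.image_congr
    intro a ha
    rw [permOf_apply hbij, combine_pos (Finset.mem_coe.mp ha)]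
  · intro σ hσ
    obtain ⟨hA, hB⟩ := (mem_filter.mp hσ).2
    have hcomb : combine A (uOf A σ) (lOf A σ) = σ := by
      funext x
      by_cases hx : x ∈ A
      · rw [combine_pos hx, uOf_pos hx]
      · rw [combine_neg hx, lOf_neg hx]
    have hbij : Function.Bijective (combine A (uOf A σ) (lOf A σ)) := by
      rw [hcomb]; exact σ.bijective
    apply Equiv.ext
    intro x
    rw [permOf_apply hbij, hcomb]
  · intro z hz
    rw [Finset.mem_product] at hz
    obtain ⟨hu, hl⟩ := hz
    have hbij := combine_bijective A B z.1 z.2 hu hl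
    simp only [UpSet, mem_filter, mem_univ, true_and] at hu
    simp only [LowSet, mem_filter, mem_univ, true_and] at hl
    have e1 : uOf A (permOf A z.1 z.2) = z.1 := by
      funext x
      by_cases hx : x ∈ A
      · rw [uOf_pos hx, permOf_apply hbij, combine_pos hx]
      · rw [uOf_neg hx, hu.2.1 x hx]
    have e2 : lOf A (permOf A z.1 z.2) = z.2 := by
      funext x
      by_cases hx : x ∈ A
      · rw [lOf_pos hx, hl.2.1 x (by rw [Finset.mem_compl, not_not]; exact hx)]
      · rw [lOf_neg hx, permOf_apply hbij, combine_neg hx]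
    show (uOf A (permOf A z.1 z.2), lOf A (permOf A z.1 z.2)) = z
    rw [e1, e2]
  · intro σ hσ
    obtain ⟨hA, hB⟩ := (mem_filter.mp hσ).2
    have h1 : cros σ = crosU A (uOf A σ) + crosL Aᶜ (lOf A σ) := by
      rw [← hA]; exact cros_split σ
    have h2 : nest σ = nestU A (uOf A σ) + nestL Aᶜ (lOf A σ) := by
      rw [← hA]; exact nest_split σ
    have h3 : fixc σ = fixL Aᶜ (lOf A σ) := by
      rw [← hA]; exact fixc_split σ
    rw [h1, h2, h3, pow_add, pow_add]
    ring


lemma upSum' (p q : ℝ) (B A : Finset (Fin n)) :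
    ∑ u ∈ UpSet A B, q ^ crosU A u * p ^ nestU A u =
      if A.card = B.card then ∏ b ∈ B, qint p q (kk A B b) else 0 :=
  upSum p q B.card B A (le_refl _)

lemma lowSum' (p q ρ : ℝ) (C D : Finset (Fin n)) :
    ∑ l ∈ LowSet C D, q ^ crosL C l * p ^ nestL C l * ρ ^ fixL C l =
      if C.card = D.card then ∏ j ∈ C, lfac p q ρ C D j else 0 :=
  lowSum p q ρ C.card C D (le_refl _)

lemma card_compl_eq_iff (A B : Finset (Fin n)) : (Aᶜ.card = Bᶜ.card) ↔ (A.card = B.card) := by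
  rw [Finset.card_compl, Finset.card_compl]
  have hA := Finset.card_le_univ A
  have hB := Finset.card_le_univ B
  omega

lemma sum_to_AB (p q X Y ρ : ℝ) :
    ∑ σ : Equiv.Perm (Fin n), q ^ cros σ * p ^ nest σ * X ^ exc σ * Y ^ cpk σ * ρ ^ fixc σ
    = ∑ AB ∈ (univ : Finset (Finset (Fin n) × Finset (Fin n))),
        (if AB.1.card = AB.2.card then
          X ^ AB.1.card * Y ^ (AB.2 \ AB.1).card
          * (∏ b ∈ AB.2, qint p q (kk AB.1 AB.2 b))
          * (∏ j ∈ AB.1ᶜ, lfac p q ρ AB.1ᶜ AB.2ᶜ j)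
        else 0) := by
  classical
  rw [← Finset.sum_fiberwise_of_maps_to
    (g := fun σ : Equiv.Perm (Fin n) => (Aset σ, Bset σ))
    (fun x _ => mem_univ _)
    (fun σ => q ^ cros σ * p ^ nest σ * X ^ exc σ * Y ^ cpk σ * ρ ^ fixc σ)]
  apply Finset.sum_congr rfl
  intro AB _
  obtain ⟨A, B⟩ := AB
  have hfc : (univ.filter fun σ : Equiv.Perm (Fin n) => (Aset σ, Bset σ) = (A, B))
      = (univ.filter fun σ : Equiv.Perm (Fin n) => Aset σ = A ∧ Bset σ = B) := by
    apply Finset.filter_congr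
    intro σ _
    simp [Prod.ext_iff]
  rw [hfc]
  have hconst : ∀ σ ∈ (univ.filter fun σ : Equiv.Perm (Fin n) => Aset σ = A ∧ Bset σ = B),
      q ^ cros σ * p ^ nest σ * X ^ exc σ * Y ^ cpk σ * ρ ^ fixc σ
      = (X ^ A.card * Y ^ (B \ A).card)
        * (q ^ cros σ * p ^ nest σ * ρ ^ fixc σ) := by
    intro σ hσ
    obtain ⟨hA, hB⟩ := (mem_filter.mp hσ).2
    rw [exc_eq, cpk_eq, hA, hB]
    ring
  rw [Finset.sum_congr rfl hconst, ← Finset.mul_sum, fiber_split p q ρ A B,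
    upSum' p q B A, lowSum' p q ρ Aᶜ Bᶜ]
  by_cases hg : A.card = B.card
  · rw [if_pos hg, if_pos ((card_compl_eq_iff A B).mpr hg), if_pos hg]
    ring
  · rw [if_neg hg, if_neg (fun hh => hg ((card_compl_eq_iff A B).mp hh)), if_neg hg]
    ring


lemma filter_card_split (S : Finset (Fin n)) (x : Fin n) :
    (S.filter (fun y => y < x)).card + (Sᶜ.filter (fun y => y < x)).card
      = (univ.filter (fun y : Fin n => y < x)).card := by
  classical
  rw [← Finset.card_union_of_disjoint]
  · congr 1
    ext y
    simp only [mem_union, mem_filter, Finset.mem_compl, mem_univ, true_and]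
    by_cases hy : y ∈ S <;> tauto
  · simp only [Finset.disjoint_left, mem_filter, Finset.mem_compl]
    rintro y ⟨hy, -⟩ ⟨hy2, -⟩
    exact hy2 hy

lemma kk_compl (A B : Finset (Fin n)) (x : Fin n) : kk Bᶜ Aᶜ x = kk A B x := by
  have h1 := filter_card_split A x
  have h2 := filter_card_split B x
  rw [kk, kk]
  omega

lemma kk_union (V P T : Finset (Fin n)) (hVT : Disjoint V T) (hPT : Disjoint P T)
    (x : Fin n) : kk (V ∪ T) (P ∪ T) x = kk V P x := by
  classical
  rw [kk, kk, Finset.filter_union, Finset.filter_union,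
    Finset.card_union_of_disjoint (Finset.disjoint_filter_filter hVT),
    Finset.card_union_of_disjoint (Finset.disjoint_filter_filter hPT)]
  omega

lemma AB_to_VPT (F : Finset (Fin n) × Finset (Fin n) → ℝ) :
    ∑ AB ∈ (univ : Finset (Finset (Fin n) × Finset (Fin n))), F AB
    = ∑ VP ∈ (univ : Finset (Finset (Fin n) × Finset (Fin n))).filter
        (fun VP => Disjoint VP.1 VP.2),
        ∑ T ∈ ((VP.1 ∪ VP.2)ᶜ).powerset, F (VP.1 ∪ T, VP.2 ∪ T) := by
  classical
  have h2 : ∑ z ∈ (univ : Finset ((Finset (Fin n) × Finset (Fin n)) × Finset (Fin n))).filter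
        (fun z => Disjoint z.1.1 z.1.2 ∧ z.2 ⊆ (z.1.1 ∪ z.1.2)ᶜ),
        F (z.1.1 ∪ z.2, z.1.2 ∪ z.2)
      = ∑ VP ∈ (univ : Finset (Finset (Fin n) × Finset (Fin n))).filter
        (fun VP => Disjoint VP.1 VP.2),
        ∑ T ∈ ((VP.1 ∪ VP.2)ᶜ).powerset, F (VP.1 ∪ T, VP.2 ∪ T) := by
    apply Finset.sum_finset_product
    intro z
    simp only [mem_filter, mem_univ, true_and, Finset.mem_powerset]
  rw [← h2]
  refine Finset.sum_nbij' (i := fun AB => ((AB.1 \ AB.2, AB.2 \ AB.1), AB.1 ∩ AB.2))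
    (j := fun z => (z.1.1 ∪ z.2, z.1.2 ∪ z.2)) ?_ ?_ ?_ ?_ ?_
  · intro AB _
    simp only [mem_filter, mem_univ, true_and]
    constructor
    · exact disjoint_sdiff_sdiff
    · intro x hx
      simp only [Finset.mem_compl, mem_union, mem_sdiff, mem_inter] at hx ⊢
      tauto
  · intro z _
    exact mem_univ _
  · intro AB _
    show ((AB.1 \ AB.2) ∪ (AB.1 ∩ AB.2), (AB.2 \ AB.1) ∪ (AB.1 ∩ AB.2)) = AB
    have e1 : (AB.1 \ AB.2) ∪ (AB.1 ∩ AB.2) = AB.1 := Finset.sdiff_union_inter _ _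
    have e2 : (AB.2 \ AB.1) ∪ (AB.1 ∩ AB.2) = AB.2 := by
      rw [Finset.inter_comm]
      exact Finset.sdiff_union_inter _ _
    rw [e1, e2]
  · intro z hz
    simp only [mem_filter, mem_univ, true_and] at hz
    obtain ⟨hd, hsub⟩ := hz
    have hTV : ∀ x ∈ z.2, x ∉ z.1.1 ∧ x ∉ z.1.2 := by
      intro x hx
      have := hsub hx
      simp only [Finset.mem_compl, mem_union] at this
      tauto
    have hVP : ∀ x ∈ z.1.1, x ∉ z.1.2 := fun x hx =>
      Finset.disjoint_left.mp hd hx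
    have e1 : (z.1.1 ∪ z.2) \ (z.1.2 ∪ z.2) = z.1.1 := by
      ext x
      simp only [mem_sdiff, mem_union]
      constructor
      · rintro ⟨h1 | h1, h2⟩
        · exact h1
        · exact absurd (Or.inr h1) h2
      · intro hx
        refine ⟨Or.inl hx, ?_⟩
        rintro (hh | hh)
        · exact hVP x hx hh
        · exact (hTV x hh).1 hx
    have e2 : (z.1.2 ∪ z.2) \ (z.1.1 ∪ z.2) = z.1.2 := by
      ext x
      simp only [mem_sdiff, mem_union]
      constructor
      · rintro ⟨h1 | h1, h2⟩
        · exact h1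
        · exact absurd (Or.inr h1) h2
      · intro hx
        refine ⟨Or.inl hx, ?_⟩
        rintro (hh | hh)
        · exact hVP x hh hx
        · exact (hTV x hh).2 hx
    have e3 : (z.1.1 ∪ z.2) ∩ (z.1.2 ∪ z.2) = z.2 := by
      ext x
      simp only [mem_inter, mem_union]
      constructor
      · rintro ⟨h1 | h1, h2 | h2⟩
        · exact absurd h2 (hVP x h1)
        · exact h2
        · exact h1
        · exact h1
      · intro hx
        exact ⟨Or.inr hx, Or.inr hx⟩
    show ((_ , _), _) = z
    rw [e1, e2, e3]
  · intro AB _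
    have e1 : (AB.1 \ AB.2) ∪ (AB.1 ∩ AB.2) = AB.1 := Finset.sdiff_union_inter _ _
    have e2 : (AB.2 \ AB.1) ∪ (AB.1 ∩ AB.2) = AB.2 := by
      rw [Finset.inter_comm]
      exact Finset.sdiff_union_inter _ _
    show F AB = F ((AB.1 \ AB.2) ∪ (AB.1 ∩ AB.2), (AB.2 \ AB.1) ∪ (AB.1 ∩ AB.2))
    rw [e1, e2]


lemma inner_T (p q X Y ρ : ℝ) (V P : Finset (Fin n)) (hVP : Disjoint V P) :
    ∑ T ∈ ((V ∪ P)ᶜ).powerset,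
      (if (V ∪ T).card = (P ∪ T).card then
        X ^ (V ∪ T).card * Y ^ ((P ∪ T) \ (V ∪ T)).card
        * (∏ b ∈ (P ∪ T), qint p q (kk (V ∪ T) (P ∪ T) b))
        * (∏ j ∈ (V ∪ T)ᶜ, lfac p q ρ (V ∪ T)ᶜ (P ∪ T)ᶜ j)
      else 0)
    = if V.card = P.card then
        X ^ V.card * Y ^ P.card * (∏ b ∈ P, qint p q (kk V P b) ^ 2)
        * ∏ x ∈ (V ∪ P)ᶜ,
            (X * qint p q (kk V P x) + (ρ * p ^ kk V P x + q * qint p q (kk V P x)))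
      else 0 := by
  classical
  have hdisj : ∀ T ∈ ((V ∪ P)ᶜ).powerset, Disjoint V T ∧ Disjoint P T := by
    intro T hT
    have hsub := Finset.mem_powerset.mp hT
    constructor
    · rw [Finset.disjoint_right]
      intro x hx
      have := hsub hx
      simp only [Finset.mem_compl, mem_union] at this
      tauto
    · rw [Finset.disjoint_right]
      intro x hx
      have := hsub hx
      simp only [Finset.mem_compl, mem_union] at this
      tauto
  by_cases hg : V.card = P.card
  · rw [if_pos hg]
    have hterm : ∀ T ∈ ((V ∪ P)ᶜ).powerset,
        (if (V ∪ T).card = (P ∪ T).card then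
          X ^ (V ∪ T).card * Y ^ ((P ∪ T) \ (V ∪ T)).card
          * (∏ b ∈ (P ∪ T), qint p q (kk (V ∪ T) (P ∪ T) b))
          * (∏ j ∈ (V ∪ T)ᶜ, lfac p q ρ (V ∪ T)ᶜ (P ∪ T)ᶜ j)
        else 0)
        = (X ^ V.card * Y ^ P.card * (∏ b ∈ P, qint p q (kk V P b) ^ 2))
          * ((∏ b ∈ T, (X * qint p q (kk V P b)))
            * (∏ x ∈ ((V ∪ P)ᶜ) \ T,
                (ρ * p ^ kk V P x + q * qint p q (kk V P x)))) := by
      intro T hT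
      have hsub := Finset.mem_powerset.mp hT
      obtain ⟨hTV, hTP⟩ := hdisj T hT
      have hguard : (V ∪ T).card = (P ∪ T).card := by
        rw [Finset.card_union_of_disjoint hTV, Finset.card_union_of_disjoint hTP, hg]
      rw [if_pos hguard]
      have hXcard : X ^ (V ∪ T).card = X ^ V.card * X ^ T.card := by
        rw [Finset.card_union_of_disjoint hTV, pow_add]
      have hsdiff : (P ∪ T) \ (V ∪ T) = P := by
        ext x
        simp only [mem_sdiff, mem_union]
        constructor
        · rintro ⟨h1 | h1, h2⟩
          · exact h1
          · exact absurd (Or.inr h1) h2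
        · intro hx
          refine ⟨Or.inl hx, ?_⟩
          rintro (hh | hh)
          · exact Finset.disjoint_left.mp hVP hh hx
          · exact Finset.disjoint_left.mp hTP hx hh
      have hprod1 : (∏ b ∈ (P ∪ T), qint p q (kk (V ∪ T) (P ∪ T) b))
          = (∏ b ∈ P, qint p q (kk V P b)) * (∏ b ∈ T, qint p q (kk V P b)) := by
        rw [Finset.prod_congr rfl
          (fun b _ => by rw [kk_union V P T hTV hTP]), Finset.prod_union hTP]
      have hcompl : (V ∪ T)ᶜ = P ∪ (((V ∪ P)ᶜ) \ T) := by
        ext x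
        simp only [Finset.mem_compl, mem_union, mem_sdiff, Finset.mem_compl, mem_union]
        constructor
        · intro hx
          push_neg at hx
          obtain ⟨hxV, hxT⟩ := hx
          by_cases hxP : x ∈ P
          · exact Or.inl hxP
          · exact Or.inr ⟨by tauto, hxT⟩
        · rintro (hx | ⟨hx, hxT⟩)
          · push_neg
            exact ⟨fun hh => absurd hx (Finset.disjoint_left.mp hVP hh),
              fun hh => Finset.disjoint_left.mp hTP hx hh⟩
          · push_neg
            tauto
      have hdisPM : Disjoint P (((V ∪ P)ᶜ) \ T) := by
        rw [Finset.disjoint_right]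
        intro x hx
        obtain ⟨hx1, -⟩ := mem_sdiff.mp hx
        simp only [Finset.mem_compl, mem_union] at hx1
        tauto
      have hlf : ∀ j : Fin n, lfac p q ρ (V ∪ T)ᶜ (P ∪ T)ᶜ j
          = if j ∈ (P ∪ T)ᶜ then ρ * p ^ kk V P j + q * qint p q (kk V P j)
            else qint p q (kk V P j) := by
        intro j
        rw [lfac, kk_compl (V ∪ T) (P ∪ T) j, kk_union V P T hTV hTP]
      have hprod2 : (∏ j ∈ (V ∪ T)ᶜ, lfac p q ρ (V ∪ T)ᶜ (P ∪ T)ᶜ j)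
          = (∏ j ∈ P, qint p q (kk V P j))
            * (∏ j ∈ ((V ∪ P)ᶜ) \ T,
                (ρ * p ^ kk V P j + q * qint p q (kk V P j))) := by
        rw [Finset.prod_congr rfl (fun j _ => hlf j), hcompl, Finset.prod_union hdisPM]
        congr 1
        · apply Finset.prod_congr rfl
          intro j hj
          exact if_neg (fun hc => (Finset.mem_compl.mp hc) (Finset.mem_union_left _ hj))
        · apply Finset.prod_congr rfl
          intro j hj
          obtain ⟨hj1, hj2⟩ := mem_sdiff.mp hj
          refine if_pos (Finset.mem_compl.mpr ?_)
          intro hh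
          rcases Finset.mem_union.mp hh with hh2 | hh2
          · exact (Finset.mem_compl.mp hj1) (Finset.mem_union_right _ hh2)
          · exact hj2 hh2
      have hsq : (∏ b ∈ P, qint p q (kk V P b) ^ 2)
          = (∏ b ∈ P, qint p q (kk V P b)) * (∏ b ∈ P, qint p q (kk V P b)) := by
        rw [← Finset.prod_mul_distrib]
        exact Finset.prod_congr rfl (fun b _ => sq _)
      have hTX : (∏ b ∈ T, (X * qint p q (kk V P b)))
          = X ^ T.card * (∏ b ∈ T, qint p q (kk V P b)) := by
        rw [Finset.prod_mul_distrib, Finset.prod_const]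
      rw [hXcard, hsdiff, hprod1, hprod2, hsq, hTX]
      ring
    rw [Finset.sum_congr rfl hterm, ← Finset.mul_sum, ← Finset.prod_add]
  · rw [if_neg hg]
    apply Finset.sum_eq_zero
    intro T hT
    obtain ⟨hTV, hTP⟩ := hdisj T hT
    rw [if_neg]
    rw [Finset.card_union_of_disjoint hTV, Finset.card_union_of_disjoint hTP]
    omega


lemma master (p q X Y ρ : ℝ) :
    ∑ σ : Equiv.Perm (Fin n), q ^ cros σ * p ^ nest σ * X ^ exc σ * Y ^ cpk σ * ρ ^ fixc σ
    = ∑ VP ∈ (univ : Finset (Finset (Fin n) × Finset (Fin n))).filter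
        (fun VP => Disjoint VP.1 VP.2),
        (if VP.1.card = VP.2.card then
          X ^ VP.1.card * Y ^ VP.2.card * (∏ b ∈ VP.2, qint p q (kk VP.1 VP.2 b) ^ 2)
          * ∏ x ∈ (VP.1 ∪ VP.2)ᶜ,
              (X * qint p q (kk VP.1 VP.2 x)
                + (ρ * p ^ kk VP.1 VP.2 x + q * qint p q (kk VP.1 VP.2 x)))
        else 0) := by
  classical
  rw [sum_to_AB p q X Y ρ,
    AB_to_VPT (fun AB => (if AB.1.card = AB.2.card then
          X ^ AB.1.card * Y ^ (AB.2 \ AB.1).card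
          * (∏ b ∈ AB.2, qint p q (kk AB.1 AB.2 b))
          * (∏ j ∈ AB.1ᶜ, lfac p q ρ AB.1ᶜ AB.2ᶜ j)
        else 0))]
  apply Finset.sum_congr rfl
  intro VP hVP
  have hd := (mem_filter.mp hVP).2
  exact inner_T p q X Y ρ VP.1 VP.2 hd

theorem final (p q r x t : ℝ) (h : (1 + x) * (x + t) * (1 + x * t) ≠ 0) :
    ∑ σ : Equiv.Perm (Fin n),
        p ^ nest σ * q ^ cros σ * (t * q) ^ exc σ * r ^ fixc σ =
      ((1 + x * t) / (1 + x)) ^ n *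
        ∑ σ : Equiv.Perm (Fin n),
          p ^ nest σ * q ^ cros σ * ((1 + x) ^ 2 * t / ((x + t) * (1 + x * t))) ^ cpk σ *
            (q * (x + t) / (1 + x * t)) ^ exc σ *
            ((1 + x) * r / (1 + x * t)) ^ fixc σ := by
  classical
  have h1 : (1 : ℝ) + x ≠ 0 := fun hh => h (by rw [hh]; ring)
  have h2 : x + t ≠ 0 := fun hh => h (by rw [hh]; ring)
  have h3 : (1 : ℝ) + x * t ≠ 0 := fun hh => h (by rw [hh]; ring)
  set c : ℝ := (1 + x * t) / (1 + x) with hc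
  set X' : ℝ := q * (x + t) / (1 + x * t) with hX'
  set Y' : ℝ := (1 + x) ^ 2 * t / ((x + t) * (1 + x * t)) with hY'
  set ρ' : ℝ := (1 + x) * r / (1 + x * t) with hρ'
  have hL : ∑ σ : Equiv.Perm (Fin n),
      p ^ nest σ * q ^ cros σ * (t * q) ^ exc σ * r ^ fixc σ
      = ∑ σ : Equiv.Perm (Fin n),
        q ^ cros σ * p ^ nest σ * (t * q) ^ exc σ * (1 : ℝ) ^ cpk σ * r ^ fixc σ := by
    apply Finset.sum_congr rfl
    intro σ _
    rw [one_pow]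
    ring
  have hR : ∑ σ : Equiv.Perm (Fin n),
      p ^ nest σ * q ^ cros σ * Y' ^ cpk σ * X' ^ exc σ * ρ' ^ fixc σ
      = ∑ σ : Equiv.Perm (Fin n),
        q ^ cros σ * p ^ nest σ * X' ^ exc σ * Y' ^ cpk σ * ρ' ^ fixc σ := by
    apply Finset.sum_congr rfl
    intro σ _
    ring
  rw [hL, hR, master p q (t * q) 1 r, master p q X' Y' ρ', Finset.mul_sum]
  apply Finset.sum_congr rfl
  intro VP hVP
  have hd := (mem_filter.mp hVP).2
  by_cases hg : VP.1.card = VP.2.card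
  · rw [if_pos hg, if_pos hg]
    symm
    have hMcard : ((VP.1 ∪ VP.2)ᶜ).card = n - VP.1.card - VP.2.card := by
      rw [Finset.card_compl, Finset.card_union_of_disjoint hd, Fintype.card_fin]
      omega
    have hle : VP.1.card + VP.2.card ≤ n := by
      have h4 := Finset.card_le_univ (VP.1 ∪ VP.2)
      rw [Finset.card_union_of_disjoint hd] at h4
      simpa using h4
    have hcn : c ^ n = c ^ VP.1.card * c ^ VP.2.card * c ^ ((VP.1 ∪ VP.2)ᶜ).card := by
      rw [← pow_add, ← pow_add, hMcard]
      congr 1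
      omega
    have hA : c * X' + c * q = t * q + q := by
      rw [hc, hX']
      field_simp
      ring
    have hB : c * ρ' = r := by
      rw [hc, hρ']
      field_simp
    have hC : (c * X') * (c * Y') = t * q := by
      rw [hc, hX', hY']
      field_simp
    have hMfac : c ^ ((VP.1 ∪ VP.2)ᶜ).card
        * ∏ x ∈ (VP.1 ∪ VP.2)ᶜ,
            (X' * qint p q (kk VP.1 VP.2 x)
              + (ρ' * p ^ kk VP.1 VP.2 x + q * qint p q (kk VP.1 VP.2 x)))
        = ∏ x ∈ (VP.1 ∪ VP.2)ᶜ,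
            ((t * q) * qint p q (kk VP.1 VP.2 x)
              + (r * p ^ kk VP.1 VP.2 x + q * qint p q (kk VP.1 VP.2 x))) := by
      rw [← Finset.prod_const, ← Finset.prod_mul_distrib]
      apply Finset.prod_congr rfl
      intro j _
      set Q := qint p q (kk VP.1 VP.2 j)
      set Pk := (p : ℝ) ^ kk VP.1 VP.2 j
      linear_combination Q * hA + Pk * hB
    have hVfac : c ^ VP.1.card * c ^ VP.2.card * (X' ^ VP.1.card * Y' ^ VP.2.card)
        = (t * q) ^ VP.1.card * (1 : ℝ) ^ VP.2.card := by
      rw [one_pow, mul_one]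
      calc c ^ VP.1.card * c ^ VP.2.card * (X' ^ VP.1.card * Y' ^ VP.2.card)
          = (c * X') ^ VP.1.card * (c * Y') ^ VP.2.card := by
            rw [mul_pow, mul_pow]; ring
        _ = ((c * X') * (c * Y')) ^ VP.1.card := by rw [← hg, ← mul_pow]
        _ = (t * q) ^ VP.1.card := by rw [hC]
    calc c ^ n * (X' ^ VP.1.card * Y' ^ VP.2.card
          * (∏ b ∈ VP.2, qint p q (kk VP.1 VP.2 b) ^ 2)
          * ∏ x ∈ (VP.1 ∪ VP.2)ᶜ,
              (X' * qint p q (kk VP.1 VP.2 x)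
                + (ρ' * p ^ kk VP.1 VP.2 x + q * qint p q (kk VP.1 VP.2 x))))
        = (c ^ VP.1.card * c ^ VP.2.card * (X' ^ VP.1.card * Y' ^ VP.2.card))
          * (∏ b ∈ VP.2, qint p q (kk VP.1 VP.2 b) ^ 2)
          * (c ^ ((VP.1 ∪ VP.2)ᶜ).card
            * ∏ x ∈ (VP.1 ∪ VP.2)ᶜ,
              (X' * qint p q (kk VP.1 VP.2 x)
                + (ρ' * p ^ kk VP.1 VP.2 x + q * qint p q (kk VP.1 VP.2 x)))) := by
          rw [hcn]; ring
      _ = (t * q) ^ VP.1.card * (1 : ℝ) ^ VP.2.card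
          * (∏ b ∈ VP.2, qint p q (kk VP.1 VP.2 b) ^ 2)
          * ∏ x ∈ (VP.1 ∪ VP.2)ᶜ,
              ((t * q) * qint p q (kk VP.1 VP.2 x)
                + (r * p ^ kk VP.1 VP.2 x + q * qint p q (kk VP.1 VP.2 x))) := by
          rw [hVfac, hMfac]
  · rw [if_neg hg, if_neg hg, mul_zero]



theorem stmt9 (n : ℕ) (hn : 1 ≤ n) (p q r x t : ℝ) (h : (1 + x) * (x + t) * (1 + x * t) ≠ 0) :
    ∑ σ : Equiv.Perm (Fin n),
        p ^ nest σ * q ^ cros σ * (t * q) ^ exc σ * r ^ fixc σ =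
      ((1 + x * t) / (1 + x)) ^ n *
        ∑ σ : Equiv.Perm (Fin n),
          p ^ nest σ * q ^ cros σ * ((1 + x) ^ 2 * t / ((x + t) * (1 + x * t))) ^ cpk σ *
            (q * (x + t) / (1 + x * t)) ^ exc σ *
            ((1 + x) * r / (1 + x * t)) ^ fixc σ := by
  exact final p q r x t h

end EulerExc
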